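/- arXiv:2508.00134 — 4 statements merged into one kernel-verified Lean document; each statement's English description precedes it below -/
import Mathlib

section
/- Let V be a finite set and let p : V → ℝ² be such that for all distinct v, w ∈ V the vector p_v − p_w is nonzero and satisfies |(p_v − p_w)₁| ≠ |(p_v − p_w)₂|. Let G₁ be the simple graph on V in which distinct v, w are adjacent iff |(p_v − p_w)₁| > |(p_v − p_w)₂|, and let G₂ be the complement of G₁ (so distinct v, w are adjacent in G₂ iff |(p_v − p_w)₂| > |(p_v − p_w)₁|). Then G₁ and G₂ are perfect graphs; in particular, both are odd-hole-free and odd-antihole-free. -/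
open Finset

attribute [local instance] Classical.propDecidable

section MirskyAux

variable {V : Type*} [Fintype V]

/-- rank of `v` by the value of `f`. -/
noncomputable def myRk (f : V → ℝ) (v : V) : ℕ :=
  (Finset.univ.filter (fun w => f w < f v)).card

lemma myRk_lt {f : V → ℝ} {v w : V} (h : f v < f w) : myRk f v < myRk f w := by
  apply Finset.card_lt_card
  constructor
  · intro u hu
    simp only [mem_filter, mem_univ, true_and] at hu ⊢
    exact hu.trans h
  · intro hsub
    have := hsub (by simp [h] : v ∈ Finset.univ.filter (fun w' => f w' < f w))
    simp at this

/-- height of `v`: length of the longest `r`-chain below `v`. -/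
noncomputable def myHt (r : V → V → Prop) (f : V → ℝ)
    (hf : ∀ v w, r v w → f v < f w) (v : V) : ℕ :=
  (Finset.univ.filter (fun w => r w v)).attach.sup
    (fun w => myHt r f hf w.1 + 1)
termination_by myRk f v
decreasing_by
  exact myRk_lt (hf _ _ (Finset.mem_filter.mp w.2).2)

lemma myHt_lt {r : V → V → Prop} {f : V → ℝ} {hf : ∀ v w, r v w → f v < f w}
    {v w : V} (h : r v w) : myHt r f hf v < myHt r f hf w := by
  rw [myHt.eq_def (v := w)]
  have hv : v ∈ Finset.univ.filter (fun u => r u w) := by simp [h]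
  have := Finset.le_sup (f := fun u : {x // x ∈ Finset.univ.filter (fun u => r u w)} =>
    myHt r f hf u.1 + 1) (Finset.mem_attach _ ⟨v, hv⟩)
  exact Nat.lt_of_succ_le (by simpa using this)

lemma myHt_exists_chain {r : V → V → Prop} (htr : Transitive r) {f : V → ℝ}
    (hf : ∀ v w, r v w → f v < f w) (v : V) :
    ∃ s : Finset V, v ∈ s ∧ (∀ x ∈ s, x = v ∨ r x v) ∧
      ((s : Set V).Pairwise fun x y => r x y ∨ r y x) ∧ s.card = myHt r f hf v + 1 := by
  generalize hn : myHt r f hf v = n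
  induction n using Nat.strong_induction_on generalizing v with
  | _ n ih =>
    rcases Finset.eq_empty_or_nonempty (Finset.univ.filter (fun w => r w v)) with he | hne
    · refine ⟨{v}, by simp, by simp, by simp, ?_⟩
      have : myHt r f hf v = 0 := by
        rw [myHt.eq_def]; rw [he]; simp
      simp [← hn, this]
    · obtain ⟨w, hw, hsup⟩ := Finset.exists_mem_eq_sup
        (Finset.univ.filter (fun u => r u v)).attach (by simpa using hne)
        (fun u => myHt r f hf u.1 + 1)
      have hwv : r w.1 v := (Finset.mem_filter.mp w.2).2
      have heq : myHt r f hf v = myHt r f hf w.1 + 1 := by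
        rw [myHt.eq_def]; exact hsup
      have hlt : myHt r f hf w.1 < n := by omega
      obtain ⟨s, hvs, hbel, hpair, hcard⟩ := ih _ hlt w.1 rfl
      have hvnots : v ∉ s := by
        intro hvmem
        rcases hbel v hvmem with h1 | h1
        · rw [← h1] at hwv; exact absurd (hf _ _ hwv) (lt_irrefl _)
        · exact absurd (hf _ _ (htr h1 hwv)) (lt_irrefl _)
      refine ⟨insert v s, Finset.mem_insert_self _ _, ?_, ?_, ?_⟩
      · intro x hx
        rcases Finset.mem_insert.mp hx with h1 | h1
        · exact Or.inl h1
        · rcases hbel x h1 with h2 | h2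
          · exact Or.inr (h2 ▸ hwv)
          · exact Or.inr (htr h2 hwv)
      · intro x hx y hy hxy
        simp only [Finset.coe_insert, Set.mem_insert_iff, Finset.mem_coe] at hx hy
        rcases hx with rfl | hx
        · rcases hy with rfl | hy
          · exact absurd rfl hxy
          · rcases hbel y hy with h2 | h2
            · exact Or.inr (h2 ▸ hwv)
            · exact Or.inr (htr h2 hwv)
        · rcases hy with rfl | hy
          · rcases hbel x hx with h2 | h2
            · exact Or.inl (h2 ▸ hwv)
            · exact Or.inl (htr h2 hwv)
          · exact hpair hx hy hxy
      · rw [Finset.card_insert_of_notMem hvnots, hcard, ← hn, heq]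

open SimpleGraph in
lemma myMirsky {r : V → V → Prop} (htr : Transitive r) {f : V → ℝ}
    (hf : ∀ v w, r v w → f v < f w) (G : SimpleGraph V)
    (hG : ∀ v w, G.Adj v w ↔ r v w ∨ r w v) :
    G.chromaticNumber = (G.cliqueNum : ℕ∞) := by
  have hclique : ∀ v, myHt r f hf v + 1 ≤ G.cliqueNum := by
    intro v
    obtain ⟨s, hvs, _, hpair, hcard⟩ := myHt_exists_chain htr hf v
    have hcl : G.IsClique s := by
      intro x hx y hy hxy
      exact (hG x y).mpr (hpair hx hy hxy)
    calc myHt r f hf v + 1 = s.card := hcard.symm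
      _ ≤ G.cliqueNum := hcl.card_le_cliqueNum
  apply le_antisymm
  · rcases isEmpty_or_nonempty V with hV | hV
    · exact (Colorable.of_isEmpty (G := G) _).chromaticNumber_le
    · have hcol : G.Colorable G.cliqueNum := by
        refine ⟨⟨fun v => ⟨myHt r f hf v, by have := hclique v; omega⟩, ?_⟩⟩
        intro v w hvw heq
        have h1 : myHt r f hf v = myHt r f hf w := by
          simpa [Fin.ext_iff] using heq
        rcases (hG v w).mp hvw with h | h
        · exact absurd h1 (Nat.ne_of_lt (myHt_lt h))
        · exact absurd h1.symm (Nat.ne_of_lt (myHt_lt h))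
      exact hcol.chromaticNumber_le
  · obtain ⟨s, hs⟩ := G.exists_isNClique_cliqueNum
    have := hs.1.card_le_chromaticNumber
    rwa [hs.2] at this

end MirskyAux

section HoleAux

open SimpleGraph
open scoped Fin.CommRing

lemma cyc_adj_succ (m : ℕ) (i : Fin (m + 5)) : (cycleGraph (m + 5)).Adj i (i + 1) := by
  rw [cycleGraph_adj']
  right
  rw [add_sub_cancel_left]
  rfl

lemma cyc_not_adj_two (m : ℕ) (i : Fin (m + 5)) : ¬ (cycleGraph (m + 5)).Adj i (i + 2) := by
  rw [cycleGraph_adj']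
  push_neg
  rw [add_sub_cancel_left, show i - (i + 2) = -2 by ring]
  constructor
  · intro h
    have h2 : (-2 : Fin (m + 5)) = 1 := Fin.ext (by rw [h]; rfl)
    have h3 : (3 : Fin (m + 5)) = 0 := by linear_combination -h2
    have := congrArg Fin.val h3
    simp only [show ((3 : Fin (m+5)) : ℕ) = 3 from rfl,
      show ((0 : Fin (m+5)) : ℕ) = 0 from rfl] at this
    omega
  · intro h
    have h2 : (2 : Fin (m + 5)) = 1 := Fin.ext (by rw [h]; rfl)
    have := congrArg Fin.val h2
    simp only [show ((2 : Fin (m+5)) : ℕ) = 2 from rfl,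
      show ((1 : Fin (m+5)) : ℕ) = 1 from rfl] at this
    omega

lemma two_add_ne (m : ℕ) (i : Fin (m + 5)) : i + 2 ≠ i := by
  intro h
  have h2 : (2 : Fin (m + 5)) = 0 := by
    have := congrArg (fun x => x - i) h
    simpa [add_comm, add_sub_cancel_right, sub_self] using this
  have := congrArg Fin.val h2
  simp only [show ((2 : Fin (m+5)) : ℕ) = 2 from rfl,
    show ((0 : Fin (m+5)) : ℕ) = 0 from rfl] at this
  omega

end HoleAux


/-- A finite simple graph is perfect if every induced subgraph has chromatic number
equal to its clique number. -/
def IsPerfect {V : Type*} (H : SimpleGraph V) : Prop :=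
  ∀ s : Set V, (H.induce s).chromaticNumber = ((H.induce s).cliqueNum : ℕ∞)

/-- `H` has an odd hole: an induced cycle of odd length at least `5`. -/
def HasOddHole {V : Type*} (H : SimpleGraph V) : Prop :=
  ∃ k : ℕ, 5 ≤ k ∧ Odd k ∧ ∃ f : Fin k ↪ V,
    ∀ a b : Fin k, H.Adj (f a) (f b) ↔ (SimpleGraph.cycleGraph k).Adj a b

/-- `H` has an odd antihole: an induced subgraph which is the complement of an odd cycle
of length at least `5`. -/
def HasOddAntihole {V : Type*} (H : SimpleGraph V) : Prop :=
  ∃ k : ℕ, 5 ≤ k ∧ Odd k ∧ ∃ f : Fin k ↪ V,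
    ∀ a b : Fin k, H.Adj (f a) (f b) ↔ ((SimpleGraph.cycleGraph k)ᶜ).Adj a b


open scoped Fin.CommRing in
lemma no_odd_hole {V : Type*} {r : V → V → Prop} (htr : Transitive r)
    (hirr : ∀ v, ¬ r v v) (G : SimpleGraph V)
    (hG : ∀ v w, G.Adj v w ↔ r v w ∨ r w v) : ¬ HasOddHole G := by
  rintro ⟨k, hk5, hkodd, f, hf⟩
  obtain ⟨m, rfl⟩ : ∃ m, k = m + 5 := ⟨k - 5, by omega⟩
  set b : Fin (m + 5) → Prop := fun i => r (f i) (f (i + 1)) with hb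
  have hstep : ∀ i : Fin (m + 5), b (i + 1) ↔ ¬ b i := by
    intro i
    have adj1 : r (f i) (f (i+1)) ∨ r (f (i+1)) (f i) :=
      (hG _ _).mp ((hf i (i+1)).mpr (cyc_adj_succ m i))
    have adj2 : r (f (i+1)) (f (i+1+1)) ∨ r (f (i+1+1)) (f (i+1)) :=
      (hG _ _).mp ((hf (i+1) (i+1+1)).mpr (cyc_adj_succ m (i+1)))
    have h12 : i + 1 + 1 = i + 2 := by ring
    rw [h12] at adj2
    have nonadj : ¬ (r (f i) (f (i+2)) ∨ r (f (i+2)) (f i)) := by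
      intro h
      exact cyc_not_adj_two m i ((hf i (i+2)).mp ((hG _ _).mpr h))
    constructor
    · intro h1 h0
      rw [hb] at h1 h0
      simp only [h12] at h1
      exact nonadj (Or.inl (htr h0 h1))
    · intro h0
      rw [hb]
      simp only [h12]
      rcases adj2 with h | h
      · exact h
      · rcases adj1 with h' | h'
        · exact absurd h' h0
        · exact absurd (Or.inr (htr h h')) nonadj
  have hparity : ∀ n : ℕ, (b ((n : Fin (m + 5))) ↔ b 0) ↔ Even n := by
    intro n
    induction n with
    | zero => simp
    | succ n ih =>
      have : ((n + 1 : ℕ) : Fin (m + 5)) = (n : Fin (m + 5)) + 1 := by push_cast; ring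
      rw [this, hstep, Nat.even_add_one, ← ih]
      tauto
  have := (hparity (m + 5)).mp (by rw [Fin.natCast_self])
  exact (Nat.not_odd_iff_even.mpr this) hkodd

/-- Let `V` be a finite set and `p : V → ℝ²` be such that for all distinct `v, w` the
vector `p v − p w` is nonzero with `|(p v − p w)₁| ≠ |(p v − p w)₂|`. Let `G₁` be the graph
where distinct `v, w` are adjacent iff `|(p v − p w)₁| > |(p v − p w)₂|` and `G₂` the graph
where distinct `v, w` are adjacent iff `|(p v − p w)₂| > |(p v − p w)₁|` (the complement of
`G₁`). Then `G₁` and `G₂` are perfect; in particular both are odd-hole-free and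
odd-antihole-free. -/
theorem monochrome_subgraphs_perfect {V : Type*} [Fintype V] (p : V → Fin 2 → ℝ)
    (hp : ∀ v w : V, v ≠ w → p v - p w ≠ 0 ∧ |(p v - p w) 0| ≠ |(p v - p w) 1|) :
    IsPerfect (SimpleGraph.fromRel fun v w => |(p v - p w) 1| < |(p v - p w) 0|) ∧
    IsPerfect (SimpleGraph.fromRel fun v w => |(p v - p w) 0| < |(p v - p w) 1|) ∧
    ¬ HasOddHole (SimpleGraph.fromRel fun v w => |(p v - p w) 1| < |(p v - p w) 0|) ∧
    ¬ HasOddHole (SimpleGraph.fromRel fun v w => |(p v - p w) 0| < |(p v - p w) 1|) ∧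
    ¬ HasOddAntihole (SimpleGraph.fromRel fun v w => |(p v - p w) 1| < |(p v - p w) 0|) ∧
    ¬ HasOddAntihole (SimpleGraph.fromRel fun v w => |(p v - p w) 0| < |(p v - p w) 1|) := by
  classical
  set r1 : V → V → Prop := fun v w =>
    (p v 0 + p v 1 < p w 0 + p w 1) ∧ (p v 0 - p v 1 < p w 0 - p w 1) with hr1
  set r2 : V → V → Prop := fun v w =>
    (p v 0 + p v 1 < p w 0 + p w 1) ∧ (p w 0 - p w 1 < p v 0 - p v 1) with hr2
  have htr1 : Transitive r1 := fun a b c h1 h2 => ⟨h1.1.trans h2.1, h1.2.trans h2.2⟩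
  have htr2 : Transitive r2 := fun a b c h1 h2 => ⟨h1.1.trans h2.1, h2.2.trans h1.2⟩
  set f : V → ℝ := fun v => p v 0 + p v 1 with hfdef
  have hf1 : ∀ v w, r1 v w → f v < f w := fun v w h => h.1
  have hf2 : ∀ v w, r2 v w → f v < f w := fun v w h => h.1
  have hirr1 : ∀ v, ¬ r1 v v := fun v h => lt_irrefl _ (hf1 v v h)
  have hirr2 : ∀ v, ¬ r2 v v := fun v h => lt_irrefl _ (hf2 v v h)
  have habs : ∀ a b : ℝ, |b| < |a| ↔ (a + b < 0 ∧ a - b < 0) ∨ (0 < a + b ∧ 0 < a - b) := by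
    intro a b
    constructor
    · intro h
      rcases abs_cases a with ⟨ha, ha2⟩ | ⟨ha, ha2⟩ <;> rcases abs_cases b with ⟨hb, hb2⟩ | ⟨hb, hb2⟩ <;>
        rw [ha, hb] at h <;>
        first
          | (left; exact ⟨by linarith, by linarith⟩)
          | (right; exact ⟨by linarith, by linarith⟩)
    · rintro (⟨h1, h2⟩ | ⟨h1, h2⟩)
      · have ha : a < 0 := by linarith
        rw [abs_of_neg ha, abs_lt]
        exact ⟨by linarith, by linarith⟩
      · have ha : 0 < a := by linarith
        rw [abs_of_pos ha, abs_lt]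
        exact ⟨by linarith, by linarith⟩
  have hsub : ∀ (v w : V) (j : Fin 2), (p v - p w) j = p v j - p w j := fun v w j => rfl
  have hG1 : ∀ v w, (SimpleGraph.fromRel fun v w => |(p v - p w) 1| < |(p v - p w) 0|).Adj v w
      ↔ r1 v w ∨ r1 w v := by
    intro v w
    rw [SimpleGraph.fromRel_adj]
    constructor
    · rintro ⟨hne, h | h⟩ <;>
      · rw [hsub, hsub] at h
        rcases (habs _ _).mp h with ⟨h1, h2⟩ | ⟨h1, h2⟩ <;>
          first
            | (left; exact ⟨by linarith, by linarith⟩)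
            | (right; exact ⟨by linarith, by linarith⟩)
    · intro h
      have hne : v ≠ w := by
        rintro rfl
        rcases h with ⟨h1, _⟩ | ⟨h1, _⟩ <;> exact lt_irrefl _ h1
      refine ⟨hne, Or.inl ?_⟩
      rw [hsub, hsub]
      apply (habs _ _).mpr
      rcases h with ⟨h1, h2⟩ | ⟨h1, h2⟩
      · exact Or.inl ⟨by linarith, by linarith⟩
      · exact Or.inr ⟨by linarith, by linarith⟩
  have hG2 : ∀ v w, (SimpleGraph.fromRel fun v w => |(p v - p w) 0| < |(p v - p w) 1|).Adj v w
      ↔ r2 v w ∨ r2 w v := by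
    intro v w
    rw [SimpleGraph.fromRel_adj]
    constructor
    · rintro ⟨hne, h | h⟩ <;>
      · rw [hsub, hsub] at h
        rcases (habs _ _).mp h with ⟨h1, h2⟩ | ⟨h1, h2⟩ <;>
          first
            | (left; exact ⟨by linarith, by linarith⟩)
            | (right; exact ⟨by linarith, by linarith⟩)
    · intro h
      have hne : v ≠ w := by
        rintro rfl
        rcases h with ⟨h1, _⟩ | ⟨h1, _⟩ <;> exact lt_irrefl _ h1
      refine ⟨hne, Or.inl ?_⟩
      rw [hsub, hsub]
      apply (habs _ _).mpr
      rcases h with ⟨h1, h2⟩ | ⟨h1, h2⟩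
      · exact Or.inl ⟨by linarith, by linarith⟩
      · exact Or.inr ⟨by linarith, by linarith⟩
  have perfect : ∀ (G : SimpleGraph V) (r : V → V → Prop), Transitive r →
      (∀ v w, r v w → f v < f w) → (∀ v w, G.Adj v w ↔ r v w ∨ r w v) → IsPerfect G := by
    intro G r htr hfr hG s
    haveI : Fintype s := Fintype.ofFinite s
    exact myMirsky (r := fun a b : s => r a b)
      (fun a b c h1 h2 => htr h1 h2)
      (f := fun a : s => f a) (fun a b h => hfr _ _ h) _
      (fun a b => hG a.1 b.1)
  have hole1 : ¬ HasOddHole (SimpleGraph.fromRel fun v w => |(p v - p w) 1| < |(p v - p w) 0|) :=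
    no_odd_hole htr1 hirr1 _ hG1
  have hole2 : ¬ HasOddHole (SimpleGraph.fromRel fun v w => |(p v - p w) 0| < |(p v - p w) 1|) :=
    no_odd_hole htr2 hirr2 _ hG2
  have compl12 : ∀ v w : V, v ≠ w →
      ((SimpleGraph.fromRel fun v w => |(p v - p w) 0| < |(p v - p w) 1|).Adj v w ↔
       ¬ (SimpleGraph.fromRel fun v w => |(p v - p w) 1| < |(p v - p w) 0|).Adj v w) := by
    intro v w hne
    rw [SimpleGraph.fromRel_adj, SimpleGraph.fromRel_adj]
    have hsymm0 : |(p w - p v) 0| = |(p v - p w) 0| := by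
      rw [hsub, hsub, abs_sub_comm]
    have hsymm1 : |(p w - p v) 1| = |(p v - p w) 1| := by
      rw [hsub, hsub, abs_sub_comm]
    have hneq := (hp v w hne).2
    rw [hsymm0, hsymm1]
    rcases lt_trichotomy (|(p v - p w) 0|) (|(p v - p w) 1|) with h | h | h
    · simp [hne, h, not_lt.mpr h.le]
      exact ⟨le_of_lt, fun _ => h⟩
    · exact absurd h hneq
    · simp [hne, h, not_lt.mpr h.le]
      exact ⟨fun h' => absurd h' (not_lt.mpr h.le), fun h' => absurd h' (not_le.mpr h)⟩
  have antihole1 : ¬ HasOddAntihole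
      (SimpleGraph.fromRel fun v w => |(p v - p w) 1| < |(p v - p w) 0|) := by
    rintro ⟨k, hk5, hkodd, g, hg⟩
    refine hole2 ⟨k, hk5, hkodd, g, fun a b => ?_⟩
    by_cases hab : a = b
    · subst hab
      simp
    · have hne : g a ≠ g b := g.injective.ne hab
      rw [compl12 _ _ hne, hg a b, SimpleGraph.compl_adj]
      simp [hab]
  have antihole2 : ¬ HasOddAntihole
      (SimpleGraph.fromRel fun v w => |(p v - p w) 0| < |(p v - p w) 1|) := by
    rintro ⟨k, hk5, hkodd, g, hg⟩
    refine hole1 ⟨k, hk5, hkodd, g, fun a b => ?_⟩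
    by_cases hab : a = b
    · subst hab
      simp
    · have hne : g a ≠ g b := g.injective.ne hab
      have : (SimpleGraph.fromRel fun v w => |(p v - p w) 1| < |(p v - p w) 0|).Adj (g a) (g b) ↔
          ¬ (SimpleGraph.fromRel fun v w => |(p v - p w) 0| < |(p v - p w) 1|).Adj (g a) (g b) := by
        rw [compl12 _ _ hne]
        tauto
      rw [this, hg a b, SimpleGraph.compl_adj]
      simp [hab]
  exact ⟨perfect _ r1 htr1 hf1 hG1, perfect _ r2 htr2 hf2 hG2, hole1, hole2, antihole1, antihole2⟩
end

section
/- Let d ≥ 1, let G = (V,E) be a finite simple graph, and let p ∈ W(G, ℓ∞^d) with induced monochrome subgraphs G₁, …, G_d. Then: (i) L(G,p) = Σ_{i=1}^d L(G_i) ⊗ B_i, where B_i is the d×d matrix with (i,i)-entry 1 and all other entries 0, and ⊗ is the Kronecker product; (ii) L(G,p) is similar, via a permutation matrix, to the block diagonal matrix L(G₁) ⊕ ⋯ ⊕ L(G_d); (iii) λ_{d+1}(L(G,p)) = min_{i ∈ {1,…,d}} λ₂(L(G_i)). -/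
open scoped Classical
open Matrix

noncomputable section

/-- The list of eigenvalues (roots of the characteristic polynomial, with multiplicity)
of a real matrix, sorted in nondecreasing order. -/
def sortedEigs {m : Type*} [Fintype m] [DecidableEq m] (A : Matrix m m ℝ) : List ℝ :=
  A.charpoly.roots.sort (· ≤ ·)

/-- `eigval A j` is the `j`-th smallest eigenvalue `λ_j(A)` (1-based, with multiplicity). -/
def eigval {m : Type*} [Fintype m] [DecidableEq m] (A : Matrix m m ℝ) (j : ℕ) : ℝ :=
  (sortedEigs A).getD (j - 1) 0

variable {V : Type*} [Fintype V] [DecidableEq V]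

/-- `p` is an ℓ∞-framework position for `G` (i.e. `p ∈ W(G, ℓ∞^d)`): along each edge the
difference of the endpoints is nonzero and has a unique coordinate of maximal absolute
value. -/
def IsLinfPos {d : ℕ} (G : SimpleGraph V) (p : V → Fin d → ℝ) : Prop :=
  ∀ ⦃v w : V⦄, G.Adj v w → p v ≠ p w ∧
    ∃ i : Fin d, ∀ j : Fin d, j ≠ i → |p v j - p w j| < |p v i - p w i|

/-- The `i`-th monochrome subgraph of the framework `(G, p)` in `ℓ∞^d`: the spanning
subgraph of `G` whose edges are those on which the `i`-th coordinate of the difference of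
the endpoints has maximal absolute value. -/
def mono {d : ℕ} (G : SimpleGraph V) (p : V → Fin d → ℝ) (i : Fin d) : SimpleGraph V where
  Adj v w := G.Adj v w ∧ ∀ j : Fin d, |p v j - p w j| ≤ |p v i - p w i|
  symm := by
    constructor
    intro v w h
    refine ⟨h.1.symm, fun j => ?_⟩
    rw [abs_sub_comm (p w j), abs_sub_comm (p w i)]
    exact h.2 j
  loopless := ⟨fun v h => G.loopless.irrefl v h.1⟩

/-- The rigidity matrix `R(G,p)` of a framework in `ℓ∞^d`, with rows indexed by edges and
columns indexed by vertex-coordinate pairs: the row of an edge `vw ∈ E_i` has entry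
`sgn((p v − p w) i)` in column `(v, i)`, entry `−sgn((p v − p w) i) = sgn((p w − p v) i)`
in column `(w, i)`, and zeros elsewhere. -/
def rigidity {d : ℕ} (G : SimpleGraph V) (p : V → Fin d → ℝ) :
    Matrix G.edgeSet (V × Fin d) ℝ := fun e vi =>
  if h : vi.1 ∈ (e : Sym2 V) then
    if (mono G p vi.2).Adj vi.1 (Sym2.Mem.other h) then
      Real.sign (p vi.1 vi.2 - p (Sym2.Mem.other h) vi.2)
    else 0
  else 0

/-- The framework Laplacian `L(G,p) = R(G,p)ᵀ R(G,p)` of a framework in `ℓ∞^d`. -/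
def fLap {d : ℕ} (G : SimpleGraph V) (p : V → Fin d → ℝ) :
    Matrix (V × Fin d) (V × Fin d) ℝ :=
  (rigidity G p)ᵀ * rigidity G p

/-- The algebraic connectivity (Fiedler number) `a(H) = λ₂(L(H))` of a finite simple
graph. -/
def algConn (H : SimpleGraph V) : ℝ := eigval (H.lapMatrix ℝ) 2

/-- The algebraic connectivity of `G` in `ℓ∞^d`:
`a(G, ℓ∞^d) = sup { λ_{d+1}(L(G,p)) : p ∈ W(G, ℓ∞^d) }`. -/
def algConnLinf (d : ℕ) (G : SimpleGraph V) : ℝ :=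
  sSup {t : ℝ | ∃ p : V → Fin d → ℝ, IsLinfPos G p ∧ t = eigval (fLap G p) (d + 1)}

end

open Matrix
open scoped Kronecker

section OrderStat

/-- Auxiliary: in a sorted list, if the predicate fails at index `j`, then at most `j`
elements satisfy a downward-closed predicate. -/
lemma List.Pairwise.countP_le_of_not {l : List ℝ} (hl : l.Pairwise (· ≤ ·)) (p : ℝ → Bool)
    (hmono : ∀ x y : ℝ, x ≤ y → p y → p x) {j : ℕ} (hj : j < l.length)
    (hpj : ¬ p l[j]) : l.countP p ≤ j := by
  have hsplit := List.take_append_drop j l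
  calc l.countP p = (l.take j ++ l.drop j).countP p := by rw [hsplit]
    _ = (l.take j).countP p + (l.drop j).countP p := List.countP_append
    _ ≤ j + 0 := by
        refine Nat.add_le_add ?_ ?_
        · exact le_trans List.countP_le_length (by simpa using Nat.min_le_left j l.length)
        · refine Nat.le_of_eq (List.countP_eq_zero.mpr ?_)
          intro a ha
          obtain ⟨k, hk, rfl⟩ := List.mem_iff_getElem.mp ha
          rw [List.getElem_drop] at *
          intro hpa
          refine hpj (hmono _ _ ?_ hpa)
          rcases Nat.eq_zero_or_pos k with hk0 | hk0
          · simp [hk0]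
          · exact List.pairwise_iff_getElem.mp hl j (j + k) _ _ (by omega)
    _ = j := Nat.add_zero j

/-- Auxiliary: in a sorted list, if a downward-closed predicate holds at index `j`, then at
least `j+1` elements satisfy it. -/
lemma List.Pairwise.lt_countP {l : List ℝ} (hl : l.Pairwise (· ≤ ·)) (p : ℝ → Bool)
    (hmono : ∀ x y : ℝ, x ≤ y → p y → p x) {j : ℕ} (hj : j < l.length)
    (hpj : p l[j]) : j + 1 ≤ l.countP p := by
  have hsplit := List.take_append_drop (j + 1) l
  have hlen : (l.take (j + 1)).length = j + 1 := by
    rw [List.length_take]; omega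
  have htake : (l.take (j + 1)).countP p = j + 1 := by
    rw [List.countP_eq_length.mpr ?_, hlen]
    intro a ha
    obtain ⟨k, hk, rfl⟩ := List.mem_iff_getElem.mp ha
    rw [List.getElem_take] at *
    rw [hlen] at hk
    refine hmono _ _ ?_ hpj
    rcases Nat.lt_or_ge k j with hkj | hkj
    · exact List.pairwise_iff_getElem.mp hl k j _ _ hkj
    · have : k = j := by omega
      simp [this]
  calc j + 1 = (l.take (j + 1)).countP p := htake.symm
    _ ≤ (l.take (j + 1)).countP p + (l.drop (j + 1)).countP p := Nat.le_add_right _ _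
    _ = (l.take (j + 1) ++ l.drop (j + 1)).countP p := (List.countP_append).symm
    _ = l.countP p := by rw [hsplit]

end OrderStat

section MatrixAux

open Matrix Polynomial

variable {n : Type*} [Fintype n] [DecidableEq n]

lemma charmatrix_blockDiagonal' {o : Type*} [Fintype o] [DecidableEq o]
    {R : Type*} [CommRing R] (M : o → Matrix n n R) :
    charmatrix (blockDiagonal M) = blockDiagonal fun i => charmatrix (M i) := by
  ext ⟨v, i⟩ ⟨w, j⟩
  simp only [charmatrix_apply, blockDiagonal_apply, diagonal_apply, Prod.mk.injEq]
  by_cases h : i = j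
  · subst h
    by_cases hv : v = w <;> simp [hv, charmatrix_apply]
  · simp [h]

lemma charpoly_blockDiagonal' {o : Type*} [Fintype o] [DecidableEq o]
    {R : Type*} [CommRing R] (M : o → Matrix n n R) :
    (blockDiagonal M).charpoly = ∏ i, (M i).charpoly := by
  unfold Matrix.charpoly
  rw [charmatrix_blockDiagonal', det_blockDiagonal]

lemma charpoly_diagonal' {R : Type*} [CommRing R] (f : n → R) :
    (diagonal f).charpoly = ∏ i, (X - C (f i)) := by
  unfold Matrix.charpoly
  have h : charmatrix (diagonal f) = diagonal fun i => X - C (f i) := by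
    ext i j
    by_cases h : i = j
    · subst h; simp
    · simp [charmatrix_apply, diagonal_apply_ne _ h, h]
  rw [h, det_diagonal]

lemma charpoly_conj' {R : Type*} [CommRing R] (U A V : Matrix n n R)
    (hUV : U * V = 1) : (U * A * V).charpoly = A.charpoly := by
  have hmap : ∀ B : Matrix n n R, B.map ⇑(C : R →+* R[X]) = (C : R →+* R[X]).mapMatrix B :=
    fun _ => rfl
  have hc : charmatrix (U * A * V) =
      (C : R →+* R[X]).mapMatrix U * charmatrix A * (C : R →+* R[X]).mapMatrix V := by
    unfold charmatrix
    rw [mul_sub, sub_mul, _root_.map_mul, _root_.map_mul]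
    congr 1
    rw [mul_assoc, (Matrix.scalar_commute (X : R[X]) (fun r' => Commute.all _ _)
      ((C : R →+* R[X]).mapMatrix V)).eq, ← mul_assoc, ← _root_.map_mul, hUV]
    simp
  have hdet : ((C : R →+* R[X]).mapMatrix U).det * ((C : R →+* R[X]).mapMatrix V).det = 1 := by
    rw [← det_mul, ← _root_.map_mul, hUV]
    simp
  unfold Matrix.charpoly
  rw [hc, det_mul, det_mul]
  ring_nf
  rw [mul_comm, ← mul_assoc]
  rw [mul_comm (((C : R →+* R[X]).mapMatrix V).det)] at *
  rw [hdet, one_mul]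

lemma roots_charpoly_hermitian {A : Matrix n n ℝ} (hA : A.IsHermitian) :
    A.charpoly.roots = Finset.univ.val.map hA.eigenvalues := by
  have hsp := hA.spectral_theorem
  set U : Matrix n n ℝ := (Matrix.IsHermitian.eigenvectorUnitary hA : Matrix n n ℝ) with hU
  have h1 : U * star U = 1 :=
    Matrix.mem_unitaryGroup_iff.mp (Matrix.IsHermitian.eigenvectorUnitary hA).2
  have hch : A.charpoly = (diagonal (RCLike.ofReal ∘ hA.eigenvalues)).charpoly :=
    (congrArg Matrix.charpoly hsp).trans (charpoly_conj' _ _ _ h1)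
  have hof : (RCLike.ofReal ∘ hA.eigenvalues : n → ℝ) = hA.eigenvalues := by
    funext i; simp [RCLike.ofReal_real_eq_id]
  rw [hch, hof, charpoly_diagonal']
  rw [Finset.prod_eq_multiset_prod]
  rw [show (Finset.univ.val.map fun i => (X : ℝ[X]) - C (hA.eigenvalues i))
      = (Finset.univ.val.map hA.eigenvalues).map fun a => (X : ℝ[X]) - C a by
    rw [Multiset.map_map]; rfl]
  exact roots_multiset_prod_X_sub_C _

end MatrixAux

section Framework

open Matrix

variable {V : Type*} [Fintype V] [DecidableEq V] {d : ℕ}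
variable {G : SimpleGraph V} {p : V → Fin d → ℝ}

lemma mono_sub_ne_zero (hp : IsLinfPos G p) {i : Fin d} {v w : V}
    (h : (mono G p i).Adj v w) : p v i - p w i ≠ 0 := by
  intro h0
  obtain ⟨hne, -⟩ := hp h.1
  apply hne
  funext j
  have hj := h.2 j
  rw [h0, abs_zero] at hj
  have := abs_nonneg (p v j - p w j)
  have : p v j - p w j = 0 := abs_eq_zero.mp (le_antisymm hj (abs_nonneg _))
  linarith [this]

lemma mono_color_eq (hp : IsLinfPos G p) {a b : Fin d} {v w : V}
    (ha : (mono G p a).Adj v w) (hb : (mono G p b).Adj v w) : a = b := by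
  obtain ⟨-, i, hi⟩ := hp ha.1
  have key : ∀ c : Fin d, (mono G p c).Adj v w → c = i := by
    intro c hc
    by_contra h
    exact ((hi c h).not_ge (hc.2 i)).elim
  rw [key a ha, key b hb]

lemma mono_color_eq' (hp : IsLinfPos G p) {a b : Fin d} {e : Sym2 V}
    (ha : e ∈ (mono G p a).edgeSet) (hb : e ∈ (mono G p b).edgeSet) : a = b := by
  induction e with
  | _ x y => exact mono_color_eq hp ha hb

lemma sign_sq {x : ℝ} (hx : x ≠ 0) : Real.sign x * Real.sign x = 1 := by
  rcases Real.sign_apply_eq_of_ne_zero x hx with h | h <;> rw [h] <;> norm_num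

lemma rigidity_apply_mem {e : G.edgeSet} {v : V} {i : Fin d} (h : v ∈ (e : Sym2 V)) :
    rigidity G p e (v, i) =
      if (mono G p i).Adj v (Sym2.Mem.other h) then
        Real.sign (p v i - p (Sym2.Mem.other h) i) else 0 :=
  dif_pos h

lemma rigidity_apply_not_mem {e : G.edgeSet} {v : V} {i : Fin d} (h : v ∉ (e : Sym2 V)) :
    rigidity G p e (v, i) = 0 :=
  dif_neg h

lemma fLap_eq_blockDiagonal (hp : IsLinfPos G p) :
    fLap G p = blockDiagonal (fun i : Fin d => (mono G p i).lapMatrix ℝ) := by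
  ext ⟨v, a⟩ ⟨w, b⟩
  rw [fLap, Matrix.mul_apply]
  simp only [transpose_apply, blockDiagonal_apply]
  by_cases hab : a = b
  · subst hab
    by_cases hvw : v = w
    · subst hvw
      -- diagonal entry: degree of v in mono a
      have key : ∀ e : G.edgeSet, rigidity G p e (v, a) * rigidity G p e (v, a) =
          if (e : Sym2 V) ∈ (mono G p a).incidenceSet v then 1 else 0 := by
        intro e
        by_cases h : v ∈ (e : Sym2 V)
        · rw [rigidity_apply_mem h]
          by_cases hadj : (mono G p a).Adj v (Sym2.Mem.other h)
          · rw [if_pos hadj, sign_sq (mono_sub_ne_zero hp hadj), if_pos]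
            exact ⟨by rw [← Sym2.other_spec h]; exact hadj, h⟩
          · rw [if_neg hadj, mul_zero, if_neg]
            rintro ⟨he, -⟩
            rw [← Sym2.other_spec h] at he
            exact hadj he
        · rw [rigidity_apply_not_mem h, mul_zero, if_neg fun hin => h hin.2]
      rw [Finset.sum_congr rfl fun e _ => key e, if_pos rfl]
      rw [Finset.sum_set_coe (f := fun x => if x ∈ (mono G p a).incidenceSet v then (1:ℝ) else 0)]
      rw [← Finset.sum_filter, Finset.sum_const, nsmul_eq_mul, mul_one]
      have hle : mono G p a ≤ G := fun _ _ h => h.1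
      have hfilter : G.edgeSet.toFinset.filter (· ∈ (mono G p a).incidenceSet v)
          = ((mono G p a).incidenceSet v).toFinset := by
        ext x
        simp only [Finset.mem_filter, Set.mem_toFinset]
        exact ⟨fun h => h.2, fun h => ⟨SimpleGraph.edgeSet_mono hle h.1, h⟩⟩
      rw [hfilter, Set.toFinset_card, SimpleGraph.card_incidenceSet_eq_degree]
      simp [SimpleGraph.lapMatrix, SimpleGraph.degMatrix, SimpleGraph.adjMatrix_apply]
    · -- off-diagonal entry
      have key : ∀ e : G.edgeSet, rigidity G p e (v, a) * rigidity G p e (w, a) =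
          if (e : Sym2 V) = s(v, w) then
            (if (mono G p a).Adj v w then (-1 : ℝ) else 0) else 0 := by
        intro e
        by_cases hv : v ∈ (e : Sym2 V)
        · by_cases hw : w ∈ (e : Sym2 V)
          · have he : (e : Sym2 V) = s(v, w) :=
              Sym2.eq_of_ne_mem hvw hv hw (Sym2.mem_mk_left v w) (Sym2.mem_mk_right v w)
            have hov : Sym2.Mem.other hv = w :=
              Sym2.congr_right.mp ((Sym2.other_spec hv).trans he)
            have how : Sym2.Mem.other hw = v :=
              Sym2.congr_right.mp ((Sym2.other_spec hw).trans (he.trans Sym2.eq_swap))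
            rw [rigidity_apply_mem hv, rigidity_apply_mem hw, hov, how, if_pos he]
            by_cases hadj : (mono G p a).Adj v w
            · rw [if_pos hadj, if_pos hadj.symm]
              have hx : p v a - p w a ≠ 0 := mono_sub_ne_zero hp hadj
              have : p w a - p v a = -(p v a - p w a) := by ring
              rw [this, Real.sign_neg, mul_neg, sign_sq hx, if_pos hadj]
            · rw [if_neg hadj, if_neg fun h => hadj h.symm, zero_mul, if_neg hadj]
          · rw [rigidity_apply_not_mem hw, mul_zero, if_neg]
            intro he
            exact hw (he ▸ Sym2.mem_mk_right v w)
        · rw [rigidity_apply_not_mem hv, zero_mul, if_neg]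
          intro he
          exact hv (he ▸ Sym2.mem_mk_left v w)
      rw [Finset.sum_congr rfl fun e _ => key e, if_pos rfl]
      rw [Finset.sum_set_coe (f := fun x => if x = s(v, w) then
        (if (mono G p a).Adj v w then (-1 : ℝ) else 0) else 0)]
      rw [Finset.sum_ite_eq' G.edgeSet.toFinset (s(v, w) : Sym2 V)]
      have hmono : (mono G p a).Adj v w → G.Adj v w := fun h => h.1
      by_cases hG : G.Adj v w
      · rw [if_pos (by rwa [Set.mem_toFinset, SimpleGraph.mem_edgeSet])]
        simp only [SimpleGraph.lapMatrix, SimpleGraph.degMatrix, Matrix.sub_apply,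
          Matrix.diagonal_apply_ne _ hvw, SimpleGraph.adjMatrix_apply, zero_sub]
        by_cases hadj : (mono G p a).Adj v w <;> simp [hadj]
      · rw [if_neg (by rw [Set.mem_toFinset, SimpleGraph.mem_edgeSet]; exact hG)]
        have hnadj : ¬ (mono G p a).Adj v w := fun h => hG (hmono h)
        simp only [SimpleGraph.lapMatrix, SimpleGraph.degMatrix, Matrix.sub_apply,
          Matrix.diagonal_apply_ne _ hvw, SimpleGraph.adjMatrix_apply, zero_sub,
          if_neg hnadj, neg_zero]
  · -- a ≠ b : entries vanish
    rw [if_neg hab]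
    refine Finset.sum_eq_zero fun e _ => ?_
    by_cases hv : v ∈ (e : Sym2 V)
    · by_cases hw : w ∈ (e : Sym2 V)
      · rw [rigidity_apply_mem hv, rigidity_apply_mem hw]
        by_cases hadj : (mono G p a).Adj v (Sym2.Mem.other hv)
        · by_cases hadj' : (mono G p b).Adj w (Sym2.Mem.other hw)
          · exfalso
            apply hab
            refine mono_color_eq' hp (e := (e : Sym2 V)) ?_ ?_
            · rw [← Sym2.other_spec hv]; exact hadj
            · rw [← Sym2.other_spec hw]; exact hadj'
          · rw [if_neg hadj', mul_zero]
        · rw [if_neg hadj, zero_mul]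
      · rw [rigidity_apply_not_mem hw, mul_zero]
    · rw [rigidity_apply_not_mem hv, zero_mul]

end Framework

section Spectra

open Matrix Polynomial

lemma multiset_countP_bind {ι α : Type*} (s : Multiset ι) (f : ι → Multiset α)
    (p : α → Prop) [DecidablePred p] :
    (s.bind f).countP p = (s.map fun i => (f i).countP p).sum := by
  induction s using Multiset.induction with
  | empty => simp
  | cons a s ih => simp [Multiset.cons_bind, Multiset.countP_add, ih]

lemma length_sortedEigs {m : Type*} [Fintype m] [DecidableEq m] (A : Matrix m m ℝ) :
    (sortedEigs A).length = Multiset.card A.charpoly.roots :=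
  Multiset.length_sort _

lemma countP_sortedEigs {m : Type*} [Fintype m] [DecidableEq m] (A : Matrix m m ℝ)
    (q : ℝ → Prop) [DecidablePred q] :
    (sortedEigs A).countP (fun x => decide (q x)) = A.charpoly.roots.countP q := by
  conv_rhs => rw [← Multiset.sort_eq A.charpoly.roots (· ≤ ·)]
  exact (Multiset.coe_countP _ _).symm

lemma multiset_sum_map_fin {d : ℕ} (g : Fin d → ℕ) :
    (Finset.univ.val.map g).sum = ∑ i, g i := rfl

variable {V : Type*} [Fintype V] [DecidableEq V]

lemma lap_roots_card (H : SimpleGraph V) :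
    Multiset.card (H.lapMatrix ℝ).charpoly.roots = Fintype.card V := by
  rw [roots_charpoly_hermitian (SimpleGraph.posSemidef_lapMatrix ℝ H).1]
  simp

lemma lap_roots_nonneg (H : SimpleGraph V) {x : ℝ}
    (hx : x ∈ (H.lapMatrix ℝ).charpoly.roots) : 0 ≤ x := by
  rw [roots_charpoly_hermitian (SimpleGraph.posSemidef_lapMatrix ℝ H).1] at hx
  obtain ⟨i, -, rfl⟩ := Multiset.mem_map.mp hx
  exact (SimpleGraph.posSemidef_lapMatrix ℝ H).eigenvalues_nonneg i

lemma lap_roots_zero_mem [Nonempty V] (H : SimpleGraph V) :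
    (0 : ℝ) ∈ (H.lapMatrix ℝ).charpoly.roots := by
  have hH := (SimpleGraph.posSemidef_lapMatrix ℝ H).1
  have hdet : (H.lapMatrix ℝ).det = 0 := by
    rw [← Matrix.exists_mulVec_eq_zero_iff]
    refine ⟨fun _ => 1, ?_, SimpleGraph.lapMatrix_mulVec_const_eq_zero H⟩
    intro h
    have := congrFun h (Classical.arbitrary V)
    norm_num at this
  have hprod : ∏ i, hH.eigenvalues i = 0 := by
    have h := hH.det_eq_prod_eigenvalues
    rw [hdet] at h
    have h2 : (0 : ℝ) = ∏ i, hH.eigenvalues i := by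
      rw [h]
      refine Finset.prod_congr rfl fun i _ => ?_
      simp [RCLike.ofReal_real_eq_id]
    exact h2.symm
  obtain ⟨i, -, hi⟩ := Finset.prod_eq_zero_iff.mp hprod
  rw [roots_charpoly_hermitian hH]
  exact Multiset.mem_map.mpr ⟨i, Multiset.mem_toFinset.mp (by simp), hi⟩

lemma eigval_blockDiagonal_lap {d : ℕ} (hd : 1 ≤ d) (Hs : Fin d → SimpleGraph V) :
    eigval (blockDiagonal fun i : Fin d => (Hs i).lapMatrix ℝ) (d + 1)
      = ⨅ i : Fin d, eigval ((Hs i).lapMatrix ℝ) 2 := by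
  haveI : Nonempty (Fin d) := ⟨⟨0, hd⟩⟩
  classical
  set n := Fintype.card V with hn
  set B := blockDiagonal fun i : Fin d => (Hs i).lapMatrix ℝ with hB
  have hroots : B.charpoly.roots
      = Finset.univ.val.bind fun i : Fin d => ((Hs i).lapMatrix ℝ).charpoly.roots := by
    rw [hB, charpoly_blockDiagonal']
    exact Polynomial.roots_prod _ _ (Finset.prod_ne_zero_iff.mpr fun i _ =>
      (Matrix.charpoly_monic _).ne_zero)
  have hcardB : Multiset.card B.charpoly.roots = d * n := by
    rw [hroots, Multiset.card_bind]
    have hc : (Finset.univ.val.map (Multiset.card ∘ fun i : Fin d =>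
        ((Hs i).lapMatrix ℝ).charpoly.roots)) = Finset.univ.val.map fun _ : Fin d => n := by
      refine Multiset.map_congr rfl fun i _ => ?_
      simpa using lap_roots_card (Hs i)
    rw [hc, multiset_sum_map_fin]
    simp [mul_comm]
  have hlen : ∀ i, (sortedEigs ((Hs i).lapMatrix ℝ)).length = n := fun i => by
    rw [length_sortedEigs, lap_roots_card]
  rcases le_or_gt n 1 with hn1 | hn1
  · have h2 : ∀ i : Fin d, eigval ((Hs i).lapMatrix ℝ) 2 = 0 := fun i => by
      rw [eigval]
      exact List.getD_eq_default _ _ (by rw [hlen]; omega)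
    have h1 : eigval B (d + 1) = 0 := by
      rw [eigval]
      refine List.getD_eq_default _ _ ?_
      rw [length_sortedEigs, hcardB]
      have := Nat.mul_le_mul_left d hn1
      omega
    rw [h1]
    simp only [h2]
    rw [ciInf_const]
  · haveI : Nonempty V := Fintype.card_pos_iff.mp (by omega)
    set ev : Fin d → ℝ := fun i => eigval ((Hs i).lapMatrix ℝ) 2 with hev
    have hev_eq : ∀ i, ev i
        = (sortedEigs ((Hs i).lapMatrix ℝ)).getD 1 0 := fun i => rfl
    have h1lt : ∀ i, 1 < (sortedEigs ((Hs i).lapMatrix ℝ)).length := fun i => by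
      rw [hlen]; omega
    have hev_getElem : ∀ i, ev i = (sortedEigs ((Hs i).lapMatrix ℝ))[1]'(h1lt i) := fun i => by
      rw [hev_eq i]
      exact List.getD_eq_getElem _ _ (h1lt i)
    have hev_mem : ∀ i, ev i ∈ ((Hs i).lapMatrix ℝ).charpoly.roots := fun i => by
      rw [hev_getElem i]
      exact (Multiset.mem_sort _).mp (List.getElem_mem _)
    have hev_nonneg : ∀ i, 0 ≤ ev i := fun i => lap_roots_nonneg _ (hev_mem i)
    obtain ⟨i0, -, hi0⟩ := Finset.exists_min_image Finset.univ ev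
      ⟨Classical.arbitrary _, Finset.mem_univ _⟩
    have hm : (⨅ i, ev i) = ev i0 :=
      le_antisymm (ciInf_le (Set.Finite.bddBelow (Set.finite_range ev)) i0)
        (le_ciInf fun j => hi0 j (Finset.mem_univ j))
    have hgoal : (⨅ i : Fin d, eigval ((Hs i).lapMatrix ℝ) 2) = ev i0 := hm
    rw [hgoal]
    set m := ev i0 with hmm
    have hdlt : d < (sortedEigs B).length := by
      rw [length_sortedEigs, hcardB]
      have h2d : d * 2 ≤ d * n := Nat.mul_le_mul_left d hn1
      omega
    have hsortB : (sortedEigs B).Pairwise (· ≤ ·) := Multiset.pairwise_sort _ _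
    have hsorti : ∀ i, (sortedEigs ((Hs i).lapMatrix ℝ)).Pairwise (· ≤ ·) :=
      fun _ => Multiset.pairwise_sort _ _
    have hmono_le : ∀ x y : ℝ, x ≤ y → decide (y ≤ m) = true → decide (x ≤ m) = true := by
      intro x y hxy hy
      simp only [decide_eq_true_eq] at *
      exact le_trans hxy hy
    have hmono_lt : ∀ x y : ℝ, x ≤ y → decide (y < m) = true → decide (x < m) = true := by
      intro x y hxy hy
      simp only [decide_eq_true_eq] at *
      exact lt_of_le_of_lt hxy hy
    -- upper bound on the count of roots < m
    have hcount_lt : (B.charpoly.roots.countP fun x => x < m) ≤ d := by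
      rw [hroots, multiset_countP_bind, multiset_sum_map_fin]
      calc (∑ i : Fin d, ((Hs i).lapMatrix ℝ).charpoly.roots.countP fun x => x < m)
          ≤ ∑ _i : Fin d, 1 := by
            refine Finset.sum_le_sum fun i _ => ?_
            rw [← countP_sortedEigs]
            refine (hsorti i).countP_le_of_not _ hmono_lt (h1lt i) ?_
            rw [← hev_getElem i]
            simp only [decide_eq_true_eq]
            exact not_lt.mpr (hi0 i (Finset.mem_univ i))
        _ = d := by simp
    -- lower bound on the count of roots ≤ m
    have hcount_le : d + 1 ≤ (B.charpoly.roots.countP fun x => x ≤ m) := by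
      rw [hroots, multiset_countP_bind, multiset_sum_map_fin]
      have hbound : ∀ i : Fin d, (if i = i0 then 2 else 1)
          ≤ ((Hs i).lapMatrix ℝ).charpoly.roots.countP fun x => x ≤ m := by
        intro i
        by_cases hii : i = i0
        · subst hii
          rw [if_pos rfl, ← countP_sortedEigs]
          refine (hsorti i).lt_countP _ hmono_le (h1lt i) ?_
          rw [← hev_getElem i]
          simp only [decide_eq_true_eq]
          exact le_of_eq hmm.symm
        · rw [if_neg hii]
          refine Multiset.countP_pos.mpr ⟨0, lap_roots_zero_mem (Hs i), hev_nonneg i0⟩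
      calc d + 1 = ∑ i : Fin d, (if i = i0 then 2 else 1) := by
            have : ∀ i : Fin d, (if i = i0 then 2 else 1) = 1 + (if i = i0 then 1 else 0) := by
              intro i; by_cases hii : i = i0 <;> simp [hii]
            rw [Finset.sum_congr rfl fun i _ => this i, Finset.sum_add_distrib,
              Finset.sum_ite_eq' Finset.univ i0 (fun _ => 1), if_pos (Finset.mem_univ i0)]
            simp [add_comm]
        _ ≤ _ := Finset.sum_le_sum fun i _ => hbound i
    rw [eigval, show d + 1 - 1 = d from rfl, List.getD_eq_getElem _ _ hdlt]
    refine le_antisymm ?_ ?_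
    · by_contra hcon
      push_neg at hcon
      have := hsortB.countP_le_of_not (fun x => decide (x ≤ m)) hmono_le hdlt
        (by simp only [decide_eq_true_eq]; exact not_le.mpr hcon)
      rw [countP_sortedEigs] at this
      omega
    · by_contra hcon
      push_neg at hcon
      have := hsortB.lt_countP (fun x => decide (x < m)) hmono_lt hdlt
        (by simp only [decide_eq_true_eq]; exact hcon)
      rw [countP_sortedEigs] at this
      omega

end Spectra

/-- Structure of the framework Laplacian in `ℓ∞^d`: for `p ∈ W(G, ℓ∞^d)` with monochrome
subgraphs `G₁, …, G_d`, (i) `L(G,p) = Σᵢ L(Gᵢ) ⊗ Bᵢ` where `Bᵢ` is the matrix unit with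
`(i,i)`-entry `1`; (ii) `L(G,p)` is permutation-similar to the block diagonal matrix
`L(G₁) ⊕ ⋯ ⊕ L(G_d)`; (iii) `λ_{d+1}(L(G,p)) = min_{i} λ₂(L(Gᵢ))`. -/
theorem fLap_structure {V : Type*} [Fintype V] [DecidableEq V] {d : ℕ} (hd : 1 ≤ d)
    (G : SimpleGraph V) (p : V → Fin d → ℝ) (hp : IsLinfPos G p) :
    fLap G p =
      ∑ i : Fin d, ((mono G p i).lapMatrix ℝ) ⊗ₖ (Matrix.single i i (1 : ℝ)) ∧
    (∃ σ : Equiv.Perm (V × Fin d),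
      fLap G p =
        (Matrix.blockDiagonal fun i : Fin d => (mono G p i).lapMatrix ℝ).submatrix σ σ) ∧
    eigval (fLap G p) (d + 1) = ⨅ i : Fin d, eigval ((mono G p i).lapMatrix ℝ) 2 := by
  have hbd := fLap_eq_blockDiagonal hp
  have hpart1 : fLap G p = ∑ i : Fin d,
      ((mono G p i).lapMatrix ℝ) ⊗ₖ (Matrix.single i i (1 : ℝ)) := by
    rw [hbd]
    ext ⟨v, a⟩ ⟨w, b⟩
    simp only [Matrix.sum_apply, Matrix.kroneckerMap_apply, Matrix.blockDiagonal_apply,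
      Matrix.single, Matrix.of_apply]
    have hterm : ∀ i : Fin d,
        (mono G p i).lapMatrix ℝ v w * (if i = a ∧ i = b then (1:ℝ) else 0)
        = if i = a then (if a = b then (mono G p a).lapMatrix ℝ v w else 0) else 0 := by
      intro i
      by_cases h1 : i = a
      · subst h1
        by_cases h2 : i = b <;> simp [h2]
      · simp [h1]
    rw [Finset.sum_congr rfl fun i _ => hterm i,
      Finset.sum_ite_eq' Finset.univ a fun _ => (if a = b then (mono G p a).lapMatrix ℝ v w else 0),
      if_pos (Finset.mem_univ a)]
  refine ⟨hpart1, ⟨Equiv.refl _, ?_⟩, ?_⟩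
  · rw [hbd, Equiv.coe_refl, Matrix.submatrix_id_id]
  · rw [hbd]
    exact eigval_blockDiagonal_lap hd _
end

section
/- Let d ≥ 2 and let G = (V,E) be a finite simple graph with at least d+1 vertices. Then a(G, ℓ∞^d) ≤ a(G)/d, where a(G) is the algebraic connectivity (Fiedler number) of G. -/
open scoped Classical
open Matrix

noncomputable section
namespace AuxLinf

open Polynomial

set_option linter.unusedSectionVars false

lemma mulVec_dot {m n : Type*} [Fintype m] [Fintype n] (A : Matrix m n ℝ)
    (x : n → ℝ) (y : m → ℝ) :
    (A *ᵥ x) ⬝ᵥ y = x ⬝ᵥ (Aᵀ *ᵥ y) := by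
  simp only [dotProduct, Matrix.mulVec, Matrix.transpose_apply, Finset.sum_mul,
    Finset.mul_sum]
  rw [Finset.sum_comm]
  exact Finset.sum_congr rfl fun i _ => Finset.sum_congr rfl fun j _ => by ring

section Spec
variable {n : Type*} [Fintype n] [DecidableEq n]


variable {n : Type*} [Fintype n] [DecidableEq n]

lemma charpoly_conj_units (P Q B : Matrix n n ℝ) (hPQ : P * Q = 1) :
    (P * B * Q).charpoly = B.charpoly := by
  have hmapPQ : (P.map (C : ℝ → ℝ[X])) * Q.map C = 1 := by
    rw [← Matrix.map_mul, hPQ]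
    simp [Matrix.map_one]
  have h1 : charmatrix (P * B * Q) = P.map C * charmatrix B * Q.map C := by
    rw [charmatrix, charmatrix, RingHom.mapMatrix_apply, RingHom.mapMatrix_apply,
      mul_sub, sub_mul]
    congr 1
    · have hc : P.map (C : ℝ → ℝ[X]) * Matrix.scalar n (X : ℝ[X])
          = Matrix.scalar n (X : ℝ[X]) * P.map C :=
        ((Matrix.scalar_commute (X : ℝ[X]) (Commute.all X) (P.map C)).eq).symm
      rw [hc, mul_assoc, hmapPQ, mul_one]
    · rw [Matrix.map_mul, Matrix.map_mul]
  rw [Matrix.charpoly, Matrix.charpoly, h1, Matrix.det_mul, Matrix.det_mul]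
  have : (P.map (C : ℝ → ℝ[X])).det * (Q.map C).det = 1 := by
    rw [← Matrix.det_mul, hmapPQ, Matrix.det_one]
  calc (P.map (C : ℝ → ℝ[X])).det * (charmatrix B).det * (Q.map C).det
      = (charmatrix B).det * ((P.map (C : ℝ → ℝ[X])).det * (Q.map C).det) := by ring
    _ = (charmatrix B).det := by rw [this, mul_one]

lemma charpoly_diagonal (μ : n → ℝ) :
    (Matrix.diagonal μ).charpoly = ∏ i, (X - C (μ i)) := by
  rw [Matrix.charpoly]
  have : charmatrix (Matrix.diagonal μ) = Matrix.diagonal fun i => X - C (μ i) := by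
    refine Matrix.ext fun i j => ?_
    by_cases h : i = j
    · subst h; rw [charmatrix_apply_eq]; simp
    · rw [charmatrix_apply_ne _ _ _ h, Matrix.diagonal_apply_ne _ h,
        Matrix.diagonal_apply_ne _ h]
      simp
  rw [this, Matrix.det_diagonal]

lemma roots_charpoly {M : Matrix n n ℝ} (hM : M.IsHermitian) :
    M.charpoly.roots = Finset.univ.val.map hM.eigenvalues := by
  have hU := hM.spectral_theorem
  have h1 : M.charpoly = (Matrix.diagonal hM.eigenvalues).charpoly := by
    have hd : Matrix.diagonal ((RCLike.ofReal : ℝ → ℝ) ∘ hM.eigenvalues)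
        = Matrix.diagonal hM.eigenvalues := by
      rw [RCLike.ofReal_real_eq_id, Function.id_comp]
    rw [hd] at hU
    conv_lhs => rw [hU]
    exact charpoly_conj_units _ _ _
      ((Matrix.mem_unitaryGroup_iff).mp (hM.eigenvectorUnitary).2)
  rw [h1, charpoly_diagonal]
  have h2 : (∏ i, (X - C (hM.eigenvalues i)))
      = ((Finset.univ.val.map hM.eigenvalues).map fun a => X - C a).prod := by
    rw [Multiset.map_map]
    rfl
  rw [h2, Polynomial.roots_multiset_prod_X_sub_C]



lemma sorted_getD_le_of_countP {s : Multiset ℝ} {k : ℕ} (hk : k ≠ 0) {c : ℝ}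
    (h : k ≤ s.countP (· ≤ c)) :
    (s.sort (· ≤ ·)).getD (k - 1) 0 ≤ c := by
  set l := s.sort (· ≤ ·) with hl
  have hsl : (l : Multiset ℝ) = s := s.sort_eq _
  have hlen : l.length = Multiset.card s := s.length_sort _
  have hkl : k ≤ l.length := by
    rw [hlen]; exact le_trans h (s.countP_le_card _)
  have hidx : k - 1 < l.length := lt_of_lt_of_le (Nat.pred_lt hk) hkl
  rw [List.getD_eq_getElem l 0 hidx]
  by_contra hc
  push_neg at hc
  have hsplit : l = l.take (k-1) ++ l.drop (k-1) := (List.take_append_drop _ _).symm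
  have hcount : s.countP (· ≤ c)
      = Multiset.countP (· ≤ c) (l.take (k-1) : Multiset ℝ)
        + Multiset.countP (· ≤ c) (l.drop (k-1) : Multiset ℝ) := by
    rw [← hsl]
    conv_lhs => rw [hsplit]
    rw [← Multiset.coe_add, Multiset.countP_add]
  have hdrop : Multiset.countP (· ≤ c) (l.drop (k-1) : Multiset ℝ) = 0 := by
    rw [Multiset.countP_eq_zero]
    intro a ha
    rw [Multiset.mem_coe, List.mem_iff_getElem] at ha
    obtain ⟨i, hi, rfl⟩ := ha
    have h1 : (l.drop (k-1))[i] = l[(k-1)+i]'(by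
        have := hi; rw [List.length_drop] at this; omega) := List.getElem_drop
    rw [h1]
    push_neg
    refine lt_of_lt_of_le hc ?_
    rcases Nat.eq_zero_or_pos i with h0 | h0
    · subst h0; simp
    · have hsorted : l.Pairwise (· ≤ ·) := s.pairwise_sort _
      exact List.pairwise_iff_getElem.mp hsorted _ _ _ _ (by omega)
  have htake : Multiset.countP (· ≤ c) (l.take (k-1) : Multiset ℝ) ≤ k - 1 := by
    refine le_trans (Multiset.countP_le_card _ _) ?_
    simp only [Multiset.coe_card, List.length_take]
    omega
  omega

lemma le_countP_sorted {s : Multiset ℝ} {k : ℕ} (hk : k ≠ 0) (h : k ≤ Multiset.card s) :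
    k ≤ s.countP (· ≤ (s.sort (· ≤ ·)).getD (k - 1) 0) := by
  set l := s.sort (· ≤ ·) with hl
  have hsl : (l : Multiset ℝ) = s := s.sort_eq _
  have hlen : l.length = Multiset.card s := s.length_sort _
  have hkl : k ≤ l.length := by omega
  have hidx : k - 1 < l.length := lt_of_lt_of_le (Nat.pred_lt hk) hkl
  rw [List.getD_eq_getElem l 0 hidx]
  set c := l[k-1] with hc
  have hsplit : l = l.take k ++ l.drop k := (List.take_append_drop _ _).symm
  have hcount : s.countP (· ≤ c)
      = Multiset.countP (· ≤ c) (l.take k : Multiset ℝ)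
        + Multiset.countP (· ≤ c) (l.drop k : Multiset ℝ) := by
    rw [← hsl]
    conv_lhs => rw [hsplit]
    rw [← Multiset.coe_add, Multiset.countP_add]
  have htake : Multiset.countP (· ≤ c) (l.take k : Multiset ℝ) = k := by
    have hall : ∀ a ∈ (l.take k : Multiset ℝ), a ≤ c := by
      intro a ha
      rw [Multiset.mem_coe, List.mem_iff_getElem] at ha
      obtain ⟨i, hi, rfl⟩ := ha
      have hik : i < k := by
        have := hi; rw [List.length_take] at this; omega
      have h1 : (l.take k)[i] = l[i]'(by omega) := List.getElem_take
      rw [h1, hc]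
      rcases Nat.lt_or_ge i (k-1) with h0 | h0
      · have hsorted : l.Pairwise (· ≤ ·) := s.pairwise_sort _
        exact List.pairwise_iff_getElem.mp hsorted _ _ _ _ (by omega)
      · have : i = k - 1 := by omega
        subst this; exact le_refl _
    rw [Multiset.countP_eq_card.mpr hall]
    simp only [Multiset.coe_card, List.length_take]
    omega
  omega



lemma getD_nonneg {l : List ℝ} (h : ∀ a ∈ l, 0 ≤ a) (i : ℕ) : 0 ≤ l.getD i 0 := by
  rcases Nat.lt_or_ge i l.length with hi | hi
  · rw [List.getD_eq_getElem l 0 hi]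
    exact h _ (List.getElem_mem _)
  · rw [List.getD_eq_default l 0 hi]


variable {n : Type*} [Fintype n] [DecidableEq n]



lemma diag_spectral {M : Matrix n n ℝ} (hM : M.IsHermitian) :
    M = (hM.eigenvectorUnitary : Matrix n n ℝ) * Matrix.diagonal hM.eigenvalues
      * star (hM.eigenvectorUnitary : Matrix n n ℝ) := by
  have hU := hM.spectral_theorem
  have hd : Matrix.diagonal ((RCLike.ofReal : ℝ → ℝ) ∘ hM.eigenvalues)
      = Matrix.diagonal hM.eigenvalues := by
    rw [RCLike.ofReal_real_eq_id, Function.id_comp]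
  rw [hd] at hU
  exact hU

lemma exists_coords {M : Matrix n n ℝ} (hM : M.IsHermitian) (x : n → ℝ) :
    ∃ c : n → ℝ, (∀ i, c i = ⇑(hM.eigenvectorBasis i) ⬝ᵥ x)
      ∧ x ⬝ᵥ (M *ᵥ x) = ∑ i, hM.eigenvalues i * c i ^ 2
      ∧ x ⬝ᵥ x = ∑ i, c i ^ 2 := by
  set U : Matrix n n ℝ := (hM.eigenvectorUnitary : Matrix n n ℝ) with hUdef
  have hU1 : U * star U = 1 := (Unitary.mem_iff.mp hM.eigenvectorUnitary.2).2
  have hU2 : star U * U = 1 := (Unitary.mem_iff.mp hM.eigenvectorUnitary.2).1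
  have hUT : Uᵀ = star U := by
    rw [Matrix.star_eq_conjTranspose, Matrix.conjTranspose_eq_transpose_of_trivial]
  set c : n → ℝ := fun i => ⇑(hM.eigenvectorBasis i) ⬝ᵥ x with hcdef
  have hc : (star U) *ᵥ x = c := by
    funext i
    simp only [Matrix.mulVec, dotProduct, hcdef]
    refine Finset.sum_congr rfl fun j _ => ?_
    have : (star U) i j = U j i := by
      rw [Matrix.star_eq_conjTranspose, Matrix.conjTranspose_apply, star_trivial]
    beta_reduce
    rw [this, hUdef]
    rw [Matrix.IsHermitian.eigenvectorUnitary_apply]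
  have hx : U *ᵥ c = x := by rw [← hc, Matrix.mulVec_mulVec, hU1, Matrix.one_mulVec]
  refine ⟨c, fun i => rfl, ?_, ?_⟩
  · have hMx : M *ᵥ x = U *ᵥ (Matrix.diagonal hM.eigenvalues *ᵥ c) := by
      conv_lhs => rw [diag_spectral hM]
      rw [← Matrix.mulVec_mulVec, ← Matrix.mulVec_mulVec, hc, hUdef]
    rw [hMx, ← hx, mulVec_dot, Matrix.mulVec_mulVec, hUT, hU2, Matrix.one_mulVec]
    simp only [dotProduct, Matrix.mulVec_diagonal]
    exact Finset.sum_congr rfl fun i _ => by ring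
  · rw [← hx, mulVec_dot, Matrix.mulVec_mulVec, hUT, hU2, Matrix.one_mulVec]
    simp only [dotProduct]
    exact Finset.sum_congr rfl fun i _ => by ring

lemma dot_self_pos {x : n → ℝ} (hx : x ≠ 0) : 0 < x ⬝ᵥ x := by
  obtain ⟨i0, hi0⟩ : ∃ i0, x i0 ≠ 0 := by
    by_contra hz; push_neg at hz; exact hx (funext hz)
  have h1 : (0:ℝ) < x i0 * x i0 := mul_self_pos.mpr hi0
  refine lt_of_lt_of_le h1 ?_
  exact Finset.single_le_sum (f := fun i => x i * x i) (fun i _ => mul_self_nonneg _)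
    (Finset.mem_univ i0)

lemma eigval_le {M : Matrix n n ℝ} (hM : M.IsHermitian) {k : ℕ} (hk : k ≠ 0) {c : ℝ}
    (v : Fin k → n → ℝ) (hli : LinearIndependent ℝ v)
    (hray : ∀ a : Fin k → ℝ,
      (∑ i, a i • v i) ⬝ᵥ (M *ᵥ (∑ i, a i • v i)) ≤ c * ((∑ i, a i • v i) ⬝ᵥ (∑ i, a i • v i))) :
    eigval M k ≤ c := by
  set μ := hM.eigenvalues with hμ
  set J : Finset n := Finset.univ.filter (fun i => μ i ≤ c) with hJdef
  have hJ : k ≤ J.card := by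
    by_contra hJk
    push_neg at hJk
    set T : Matrix J (Fin k) ℝ := Matrix.of (fun j i => ⇑(hM.eigenvectorBasis (j : n)) ⬝ᵥ v i)
      with hT
    have hni : ¬ Function.Injective T.mulVecLin := by
      intro hinj
      have h1 := LinearMap.finrank_le_finrank_of_injective hinj
      rw [Module.finrank_pi, Module.finrank_pi, Fintype.card_fin, Fintype.card_coe] at h1
      omega
    obtain ⟨a₁, a₂, he, hne⟩ := Function.not_injective_iff.mp hni
    set a := a₁ - a₂ with hadef
    have haz : T *ᵥ a = 0 := by
      have : T.mulVecLin a = 0 := by rw [hadef, map_sub, he, sub_self]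
      simpa [Matrix.mulVecLin_apply] using this
    have ha : a ≠ 0 := sub_ne_zero.mpr hne
    set x := ∑ i, a i • v i with hxdef
    have hx0 : x ≠ 0 := by
      intro h
      exact ha (funext fun i => Fintype.linearIndependent_iff.mp hli a (by rw [← hxdef]; exact h) i)
    obtain ⟨cc, hcc, hq, hn⟩ := exists_coords hM x
    have hcJ : ∀ j : n, ∀ hj : j ∈ J, cc j = 0 := by
      intro j hj
      have h0 : (T *ᵥ a) ⟨j, hj⟩ = 0 := by rw [haz]; rfl
      rw [Matrix.mulVec, dotProduct] at h0
      rw [hcc j, hxdef]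
      calc ⇑(hM.eigenvectorBasis j) ⬝ᵥ (∑ i, a i • v i)
          = ∑ i, a i * (⇑(hM.eigenvectorBasis j) ⬝ᵥ v i) := by
            simp only [dotProduct, Finset.sum_apply, Pi.smul_apply, smul_eq_mul,
              Finset.mul_sum]
            rw [Finset.sum_comm]
            exact Finset.sum_congr rfl fun i _ => Finset.sum_congr rfl fun w _ => by ring
        _ = ∑ i, T ⟨j, hj⟩ i * a i := Finset.sum_congr rfl fun i _ => by simp only [hT, Matrix.of_apply]; ring
        _ = 0 := h0
    have hxx : 0 < ∑ i, cc i ^ 2 := by rw [← hn]; exact dot_self_pos hx0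
    have hsum : 0 < ∑ i, (μ i - c) * cc i ^ 2 := by
      have hterm : ∀ i ∈ Finset.univ, 0 ≤ (μ i - c) * cc i ^ 2 := by
        intro i _
        by_cases hi : i ∈ J
        · rw [hcJ i hi]; simp
        · have hgt : c < μ i := by
            rw [hJdef, Finset.mem_filter] at hi
            push_neg at hi
            exact hi (Finset.mem_univ _)
          have h1 : (0:ℝ) ≤ μ i - c := by linarith
          positivity
      obtain ⟨i0, hi0⟩ : ∃ i0, cc i0 ≠ 0 := by
        by_contra hz; push_neg at hz
        rw [Finset.sum_eq_zero (fun i _ => by rw [hz i]; ring)] at hxx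
        exact lt_irrefl _ hxx
      have hi0J : i0 ∉ J := fun h => hi0 (hcJ _ h)
      have hgt : c < μ i0 := by
        rw [hJdef, Finset.mem_filter] at hi0J
        push_neg at hi0J
        exact hi0J (Finset.mem_univ _)
      refine Finset.sum_pos' hterm ⟨i0, Finset.mem_univ _, ?_⟩
      have h2 : 0 < cc i0 ^ 2 := by positivity
      nlinarith
    have hray' := hray a
    rw [← hxdef] at hray'
    rw [hq, hn] at hray'
    have hexp : ∑ i, (μ i - c) * cc i ^ 2 = ∑ i, μ i * cc i ^ 2 - c * ∑ i, cc i ^ 2 := by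
      rw [Finset.mul_sum, ← Finset.sum_sub_distrib]
      exact Finset.sum_congr rfl fun i _ => by ring
    rw [hexp] at hsum
    linarith
  have hcount : k ≤ M.charpoly.roots.countP (· ≤ c) := by
    rw [roots_charpoly hM, Multiset.countP_map]
    refine le_trans hJ (le_of_eq ?_)
    rw [Finset.card_def, hJdef, Finset.filter_val]
  have h := sorted_getD_le_of_countP hk hcount
  simpa [eigval, sortedEigs] using h

lemma exists_low_vector {M : Matrix n n ℝ} (hM : M.IsHermitian) (h2 : 2 ≤ Fintype.card n)
    (z : n → ℝ) :
    ∃ f : n → ℝ, f ≠ 0 ∧ f ⬝ᵥ z = 0 ∧ f ⬝ᵥ (M *ᵥ f) ≤ eigval M 2 * (f ⬝ᵥ f) := by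
  set c := eigval M 2 with hcdef
  have hcard : Multiset.card M.charpoly.roots = Fintype.card n := by
    rw [roots_charpoly hM]; simp
  have hc2 : 2 ≤ M.charpoly.roots.countP (· ≤ c) := by
    have h := le_countP_sorted (s := M.charpoly.roots) (k := 2) (by norm_num) (by omega)
    have hce : c = (M.charpoly.roots.sort (· ≤ ·)).getD (2 - 1) 0 := by
      rw [hcdef]; rfl
    rw [← hce] at h
    exact h
  set μ := hM.eigenvalues with hμ
  have hJ : 2 ≤ (Finset.univ.filter (fun i => μ i ≤ c)).card := by
    rw [roots_charpoly hM, Multiset.countP_map] at hc2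
    refine le_trans hc2 (le_of_eq ?_)
    rw [Finset.card_def, Finset.filter_val]
  obtain ⟨i1, hi1, i2, hi2, hne⟩ := Finset.one_lt_card.mp hJ
  rw [Finset.mem_filter] at hi1 hi2
  set B := hM.eigenvectorBasis with hB
  have horth : ∀ i j : n, ⇑(B i) ⬝ᵥ ⇑(B j) = if i = j then (1:ℝ) else 0 := by
    intro i j
    have h := orthonormal_iff_ite.mp B.orthonormal i j
    have h2 : (inner ℝ (B i) (B j) : ℝ) = ⇑(B i) ⬝ᵥ ⇑(B j) := by
      simp [PiLp.inner_apply, dotProduct, RCLike.inner_apply, conj_trivial]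
      exact Finset.sum_congr rfl fun x _ => mul_comm _ _
    rw [h2] at h
    rw [h]
  have key : ∀ a0 a1 : ℝ, ¬(a0 = 0 ∧ a1 = 0) →
      (a0 • ⇑(B i1) + a1 • ⇑(B i2)) ≠ 0 ∧
      (a0 • ⇑(B i1) + a1 • ⇑(B i2)) ⬝ᵥ (M *ᵥ (a0 • ⇑(B i1) + a1 • ⇑(B i2)))
        ≤ c * ((a0 • ⇑(B i1) + a1 • ⇑(B i2)) ⬝ᵥ (a0 • ⇑(B i1) + a1 • ⇑(B i2))) := by
    intro a0 a1 ha
    set f : n → ℝ := a0 • ⇑(B i1) + a1 • ⇑(B i2) with hf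
    have hdot1 : ⇑(B i1) ⬝ᵥ f = a0 := by
      rw [hf, dotProduct_add, dotProduct_smul, dotProduct_smul,
        horth, horth, if_pos rfl, if_neg hne]
      simp
    have hdot2 : ⇑(B i2) ⬝ᵥ f = a1 := by
      rw [hf, dotProduct_add, dotProduct_smul, dotProduct_smul,
        horth, horth, if_neg (Ne.symm hne), if_pos rfl]
      simp
    constructor
    · intro h0
      rw [h0] at hdot1 hdot2
      simp only [dotProduct_zero] at hdot1 hdot2
      exact ha ⟨hdot1.symm, hdot2.symm⟩
    · have hMf : M *ᵥ f = (a0 * μ i1) • ⇑(B i1) + (a1 * μ i2) • ⇑(B i2) := by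
        rw [hf, Matrix.mulVec_add, Matrix.mulVec_smul, Matrix.mulVec_smul,
          hM.mulVec_eigenvectorBasis, hM.mulVec_eigenvectorBasis]
        rw [smul_smul, smul_smul]
      have hff : f ⬝ᵥ f = a0 ^ 2 + a1 ^ 2 := by
        rw [hf, add_dotProduct, smul_dotProduct, smul_dotProduct,
          ← hf, hdot1, hdot2]
        ring_nf
      have hfMf : f ⬝ᵥ (M *ᵥ f) = μ i1 * a0 ^ 2 + μ i2 * a1 ^ 2 := by
        rw [hMf, dotProduct_add, dotProduct_smul, dotProduct_smul,
          hf, add_dotProduct, add_dotProduct, smul_dotProduct,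
          smul_dotProduct, smul_dotProduct, smul_dotProduct,
          horth, horth, horth, horth, if_pos rfl, if_pos rfl, if_neg hne, if_neg (Ne.symm hne)]
        simp only [smul_eq_mul, mul_zero, mul_one, add_zero, zero_add]
        ring
      rw [hff, hfMf]
      nlinarith [hi1.2, hi2.2, sq_nonneg a0, sq_nonneg a1]
  set s1 := ⇑(B i1) ⬝ᵥ z with hs1
  set s2 := ⇑(B i2) ⬝ᵥ z with hs2
  by_cases hz : s1 = 0 ∧ s2 = 0
  · obtain ⟨h1, h2⟩ := key 1 0 (by simp)
    refine ⟨1 • ⇑(B i1) + 0 • ⇑(B i2), h1, ?_, h2⟩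
    rw [add_dotProduct, smul_dotProduct, smul_dotProduct, ← hs1, ← hs2,
      hz.1, hz.2]
    simp
  · obtain ⟨h1, h2⟩ := key s2 (-s1) (by
      intro h
      exact hz ⟨by simpa using congrArg Neg.neg h.2, h.1⟩)
    refine ⟨s2 • ⇑(B i1) + (-s1) • ⇑(B i2), h1, ?_, h2⟩
    rw [add_dotProduct, smul_dotProduct, smul_dotProduct, ← hs1, ← hs2]
    simp [mul_comm]


end Spec

section App
variable {V : Type*} [Fintype V] [DecidableEq V]



section EdgeSum

variable (G : SimpleGraph V)

lemma sum_darts_eq_twice (F : Sym2 V → ℝ) :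
    ∑ d : G.Dart, F d.edge = ∑ e ∈ G.edgeFinset, 2 * F e := by
  rw [← Finset.sum_fiberwise_of_maps_to
    (g := SimpleGraph.Dart.edge) (t := G.edgeFinset)
    (fun d _ => SimpleGraph.mem_edgeFinset.mpr d.edge_mem) (fun d => F d.edge)]
  refine Finset.sum_congr rfl fun e he => ?_
  have h1 : ∀ d ∈ Finset.univ.filter (fun d : G.Dart => d.edge = e), F d.edge = F e := by
    intro d hd
    rw [(Finset.mem_filter.mp hd).2]
  rw [Finset.sum_congr rfl h1, Finset.sum_const]
  rw [SimpleGraph.dart_edge_fiber_card G e (SimpleGraph.mem_edgeFinset.mp he)]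
  simp [mul_comm]

lemma sum_darts_eq_double (F : Sym2 V → ℝ) :
    ∑ d : G.Dart, F d.edge = ∑ v, ∑ w, if G.Adj v w then F s(v, w) else 0 := by
  let e : G.Dart ≃ {p : V × V // G.Adj p.1 p.2} :=
    ⟨fun d => ⟨d.toProd, d.adj⟩, fun p => ⟨p.1, p.2⟩, fun d => rfl, fun p => rfl⟩
  rw [Fintype.sum_equiv e (fun d => F d.edge)
    (fun p : {p : V × V // G.Adj p.1 p.2} => F s(p.1.1, p.1.2))
    (fun d => by obtain ⟨⟨v, w⟩, h⟩ := d; rfl)]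
  rw [← Finset.sum_subtype (Finset.univ.filter (fun p : V × V => G.Adj p.1 p.2))
    (fun p => by simp) (fun p : V × V => F s(p.1, p.2))]
  rw [Finset.sum_filter]
  exact Fintype.sum_prod_type _

lemma sum_edgeFinset_eq (F : Sym2 V → ℝ) :
    2 * ∑ e ∈ G.edgeFinset, F e = ∑ v, ∑ w, if G.Adj v w then F s(v, w) else 0 := by
  rw [← sum_darts_eq_double, sum_darts_eq_twice, Finset.mul_sum]

end EdgeSum

section Rigidity

variable {d : ℕ} {G : SimpleGraph V} {p : V → Fin d → ℝ}

lemma rigidity_mulVec (hd : 2 ≤ d) (hp : IsLinfPos G p) {a b : V} (hab : G.Adj a b)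
    (x : V × Fin d → ℝ) :
    ∃ i₀ : Fin d, p a i₀ - p b i₀ ≠ 0 ∧
      (rigidity G p *ᵥ x) ⟨s(a, b), (G.mem_edgeSet).mpr hab⟩
        = Real.sign (p a i₀ - p b i₀) * (x (a, i₀) - x (b, i₀)) := by
  obtain ⟨hne, i₀, hstrict⟩ := hp hab
  have hab' : a ≠ b := G.ne_of_adj hab
  have hnz : p a i₀ - p b i₀ ≠ 0 := by
    obtain ⟨j, hj⟩ := Fintype.exists_ne_of_one_lt_card
      (by rw [Fintype.card_fin]; omega) i₀
    intro h0
    have := hstrict j hj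
    rw [h0, abs_zero] at this
    exact absurd this (not_lt.mpr (abs_nonneg _))
  have hmono : ∀ j : Fin d, (mono G p j).Adj a b ↔ j = i₀ := by
    intro j
    constructor
    · intro h
      change G.Adj a b ∧ _ at h
      by_contra hji
      exact absurd (h.2 i₀) (not_le.mpr (hstrict j hji))
    · rintro rfl
      show G.Adj a b ∧ _
      refine ⟨hab, fun k => ?_⟩
      rcases eq_or_ne k j with rfl | hk
      · exact le_refl _
      · exact le_of_lt (hstrict k hk)
  refine ⟨i₀, hnz, ?_⟩
  set e : G.edgeSet := ⟨s(a, b), (G.mem_edgeSet).mpr hab⟩ with hedef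
  have hrow : ∀ vi : V × Fin d, rigidity G p e vi =
      (if vi = (a, i₀) then Real.sign (p a i₀ - p b i₀) else 0)
      + (if vi = (b, i₀) then - Real.sign (p a i₀ - p b i₀) else 0) := by
    rintro ⟨v, j⟩
    show (if h : v ∈ (e : Sym2 V) then
        (if (mono G p j).Adj v (Sym2.Mem.other h) then
          Real.sign (p v j - p (Sym2.Mem.other h) j) else 0) else 0) = _
    have hecoe : (e : Sym2 V) = s(a, b) := rfl
    by_cases hv : v ∈ (e : Sym2 V)
    · rw [dif_pos hv]
      have hv' : v = a ∨ v = b := Sym2.mem_iff.mp (hecoe ▸ hv)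
      rcases hv' with rfl | rfl
      · have hother : Sym2.Mem.other hv = b :=
          Sym2.congr_right.mp ((Sym2.other_spec hv).trans hecoe)
        rw [hother]
        by_cases hj : j = i₀
        · have h2 : ((v : V), i₀) ≠ (b, i₀) := by simp [hab']
          rw [if_pos ((hmono j).mpr hj), hj, if_pos rfl, if_neg h2, add_zero]
        · rw [if_neg (fun hAdj => hj ((hmono j).mp hAdj))]
          have h1 : ((v : V), j) ≠ (v, i₀) := by simp [hj]
          have h2 : ((v : V), j) ≠ (b, i₀) := by simp [hab']
          rw [if_neg h1, if_neg h2, add_zero]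
      · have hother : Sym2.Mem.other hv = a :=
          Sym2.congr_right.mp (((Sym2.other_spec hv).trans hecoe).trans (Sym2.eq_swap))
        rw [hother]
        by_cases hj : j = i₀
        · have hadj : (mono G p j).Adj v a := by
            rw [(mono G p j).adj_comm]
            exact (hmono j).mpr hj
          have h1 : ((v : V), i₀) ≠ (a, i₀) := by simp [Ne.symm hab']
          rw [if_pos hadj, hj, if_neg h1, if_pos rfl, zero_add,
            show p v i₀ - p a i₀ = -(p a i₀ - p v i₀) by ring, Real.sign_neg]
        · have hadj : ¬ (mono G p j).Adj v a := by
            rw [(mono G p j).adj_comm]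
            exact fun h => hj ((hmono j).mp h)
          rw [if_neg hadj]
          have h1 : ((v : V), j) ≠ (a, i₀) := by simp [Ne.symm hab']
          have h2 : ((v : V), j) ≠ (v, i₀) := by simp [hj]
          rw [if_neg h1, if_neg h2, add_zero]
    · rw [dif_neg hv]
      rw [hecoe, Sym2.mem_iff] at hv
      push_neg at hv
      have h1 : ((v : V), j) ≠ (a, i₀) := by simp [hv.1]
      have h2 : ((v : V), j) ≠ (b, i₀) := by simp [hv.2]
      rw [if_neg h1, if_neg h2, add_zero]
  show (rigidity G p *ᵥ x) e = _
  rw [Matrix.mulVec, dotProduct]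
  rw [Finset.sum_congr rfl (fun vi _ => by rw [hrow vi])]
  simp only [add_mul, ite_mul, zero_mul, neg_mul]
  rw [Finset.sum_add_distrib, Finset.sum_ite_eq' Finset.univ ((a, i₀) : V × Fin d),
    Finset.sum_ite_eq' Finset.univ ((b, i₀) : V × Fin d)]
  simp only [Finset.mem_univ, if_pos]
  ring

lemma fLap_quadform (x : V × Fin d → ℝ) :
    x ⬝ᵥ (fLap G p *ᵥ x) = ∑ e : G.edgeSet, ((rigidity G p *ᵥ x) e) ^ 2 := by
  rw [fLap, ← Matrix.mulVec_mulVec]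
  rw [← mulVec_dot (rigidity G p) x (rigidity G p *ᵥ x)]
  simp only [dotProduct, sq]

end Rigidity


end App

end AuxLinf
end

/-- For `d ≥ 2` and a finite simple graph `G` with at least `d+1` vertices,
`a(G, ℓ∞^d) ≤ a(G)/d`, where `a(G)` is the algebraic connectivity (Fiedler number). -/
theorem algConnLinf_le_algConn_div {V : Type*} [Fintype V] [DecidableEq V] {d : ℕ}
    (hd : 2 ≤ d) (G : SimpleGraph V) (hV : d + 1 ≤ Fintype.card V) :
    algConnLinf d G ≤ algConn G / d := by

  have hd0 : (0:ℝ) < d := by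
    have : 0 < d := by omega
    exact_mod_cast this
  have hpsd : (G.lapMatrix ℝ).PosSemidef := SimpleGraph.posSemidef_lapMatrix ℝ G
  have hL : (G.lapMatrix ℝ).IsHermitian := hpsd.1
  have hconn_nonneg : 0 ≤ algConn G := by
    unfold algConn eigval
    apply AuxLinf.getD_nonneg
    intro t ht
    unfold sortedEigs at ht
    rw [Multiset.mem_sort, AuxLinf.roots_charpoly hL, Multiset.mem_map] at ht
    obtain ⟨i, _, rfl⟩ := ht
    exact hpsd.eigenvalues_nonneg i
  have hbound : 0 ≤ algConn G / d := by positivity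
  apply Real.sSup_le _ hbound
  rintro t ⟨p, hp, rfl⟩
  -- get a Fiedler-type vector
  have hcardV : 2 ≤ Fintype.card V := by omega
  obtain ⟨f, hf0, hfz, hfM⟩ := AuxLinf.exists_low_vector hL hcardV (fun _ => 1)
  have hsum0 : ∑ v, f v = 0 := by simpa [dotProduct] using hfz
  have hfMa : f ⬝ᵥ (G.lapMatrix ℝ *ᵥ f) ≤ algConn G * (f ⬝ᵥ f) := hfM
  -- the subspace
  set vv : Fin (d+1) → (V × Fin d → ℝ) := fun i =>
    Fin.lastCases (fun vj => f vj.1) (fun i0 vj => if vj.2 = i0 then 1 else 0) i with hvv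
  have hxeval : ∀ (aa : Fin (d+1) → ℝ) (v : V) (j : Fin d),
      (∑ i, aa i • vv i) (v, j) = aa (Fin.castSucc j) + aa (Fin.last d) * f v := by
    intro aa v j
    rw [Finset.sum_apply, Fin.sum_univ_castSucc]
    simp only [Pi.smul_apply, smul_eq_mul, hvv, Fin.lastCases_castSucc, Fin.lastCases_last]
    simp only [mul_ite, mul_one, mul_zero]
    rw [Finset.sum_ite_eq Finset.univ j (fun i0 => aa (Fin.castSucc i0))]
    simp
  have hVne : Nonempty V := by
    have : 0 < Fintype.card V := by omega
    exact Fintype.card_pos_iff.mp this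
  obtain ⟨v0⟩ := hVne
  have hdpos : 0 < d := by omega
  have hli : LinearIndependent ℝ vv := by
    rw [Fintype.linearIndependent_iff]
    intro aa haa
    have heval : ∀ (v : V) (j : Fin d),
        aa (Fin.castSucc j) + aa (Fin.last d) * f v = 0 := by
      intro v j
      rw [← hxeval aa v j, haa]
      rfl
    have hlast : aa (Fin.last d) = 0 := by
      by_contra hne
      set j0 : Fin d := ⟨0, hdpos⟩
      have hconst : ∀ v, f v = - aa (Fin.castSucc j0) / aa (Fin.last d) := by
        intro v
        have h := heval v j0
        field_simp
        linarith
      have hzero : f v0 = 0 := by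
        have hs := hsum0
        rw [Finset.sum_congr rfl (fun w _ => hconst w), Finset.sum_const,
          nsmul_eq_mul] at hs
        have hcard0 : (0:ℝ) < Fintype.card V := by
          have : 0 < Fintype.card V := by omega
          exact_mod_cast this
        have : - aa (Fin.castSucc j0) / aa (Fin.last d) = 0 := by
          rcases mul_eq_zero.mp hs with h | h
          · exact absurd h (ne_of_gt hcard0)
          · exact h
        rw [hconst v0, this]
      have : ∀ v, f v = 0 := by
        intro v
        rw [hconst v, ← hconst v0, hzero]
      exact hf0 (funext this)
    intro i
    refine Fin.lastCases ?_ ?_ i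
    · exact hlast
    · intro j
      have h := heval v0 j
      rw [hlast, zero_mul, add_zero] at h
      exact h
  -- Rayleigh bound on the subspace
  have hray : ∀ aa : Fin (d+1) → ℝ,
      (∑ i, aa i • vv i) ⬝ᵥ (fLap G p *ᵥ (∑ i, aa i • vv i))
        ≤ (algConn G / d) * ((∑ i, aa i • vv i) ⬝ᵥ (∑ i, aa i • vv i)) := by
    intro aa
    set x : V × Fin d → ℝ := ∑ i, aa i • vv i with hxdef
    set A : ℝ := aa (Fin.last d) with hA
    have hxev : ∀ (v : V) (j : Fin d), x (v, j) = aa (Fin.castSucc j) + A * f v := by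
      intro v j
      rw [hxdef]
      exact hxeval aa v j
    set Fl : Sym2 V → ℝ := Sym2.lift ⟨fun u w => (f u - f w)^2, fun u w => by ring⟩ with hFl
    have hF : ∀ e : G.edgeSet, ((rigidity G p *ᵥ x) e) ^ 2 = A ^ 2 * Fl (e : Sym2 V) := by
      rintro ⟨q, hq⟩
      induction q using Sym2.ind with
      | _ a b =>
        have hab : G.Adj a b := (G.mem_edgeSet).mp hq
        obtain ⟨i₀, hnz, heq⟩ := AuxLinf.rigidity_mulVec hd hp hab x
        have hee : (⟨s(a,b), hq⟩ : G.edgeSet)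
            = ⟨s(a,b), (G.mem_edgeSet).mpr hab⟩ := rfl
        rw [hee, heq, mul_pow]
        have hsgn : Real.sign (p a i₀ - p b i₀) ^ 2 = 1 := by
          rcases Real.sign_apply_eq_of_ne_zero _ hnz with h | h <;> rw [h] <;> norm_num
        rw [hsgn, one_mul, hxev a i₀, hxev b i₀]
        simp only [hFl, Sym2.lift_mk]
        ring
    have hL1 : x ⬝ᵥ (fLap G p *ᵥ x) = A ^ 2 * ∑ e ∈ G.edgeFinset, Fl e := by
      rw [AuxLinf.fLap_quadform, Finset.sum_congr rfl (fun e _ => hF e), ← Finset.mul_sum]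
      congr 1
      rw [← Finset.sum_subtype G.edgeFinset (fun e => SimpleGraph.mem_edgeFinset) Fl]
    have hquad : ∑ e ∈ G.edgeFinset, Fl e = f ⬝ᵥ (G.lapMatrix ℝ *ᵥ f) := by
      have h2 := AuxLinf.sum_edgeFinset_eq G Fl
      have h3 := G.lapMatrix_toLinearMap₂' (R := ℝ) f
      rw [Matrix.toLinearMap₂'_apply'] at h3
      have h4 : ∑ v, ∑ w, (if G.Adj v w then Fl s(v,w) else 0)
          = ∑ v, ∑ w, (if G.Adj v w then (f v - f w)^2 else 0) := by
        simp [hFl, Sym2.lift_mk]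
      rw [h4] at h2
      rw [h3]
      linarith
    have hxx : (d : ℝ) * (A ^ 2 * (f ⬝ᵥ f)) ≤ x ⬝ᵥ x := by
      have h1 : x ⬝ᵥ x = ∑ vj : V × Fin d, (x vj) ^ 2 := by
        simp [dotProduct, sq]
      rw [h1, Fintype.sum_prod_type, Finset.sum_comm]
      have hff : f ⬝ᵥ f = ∑ v, (f v) ^ 2 := by simp [dotProduct, sq]
      have hj : ∀ j : Fin d, A ^ 2 * (f ⬝ᵥ f) ≤ ∑ v, (x (v, j)) ^ 2 := by
        intro j
        have hexp : ∀ v : V, (x (v,j))^2 = (aa (Fin.castSucc j))^2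
            + 2 * aa (Fin.castSucc j) * A * f v + A^2 * (f v)^2 := by
          intro v
          rw [hxev v j]
          ring
        rw [Finset.sum_congr rfl fun v _ => hexp v]
        rw [Finset.sum_add_distrib, Finset.sum_add_distrib, ← Finset.mul_sum, ← Finset.mul_sum]
        rw [hsum0, mul_zero, hff]
        have hnn : (0:ℝ) ≤ ∑ _v : V, (aa (Fin.castSucc j))^2 := by positivity
        linarith
      calc (d:ℝ) * (A^2 * (f ⬝ᵥ f)) = ∑ _j : Fin d, A^2 * (f ⬝ᵥ f) := by
            rw [Finset.sum_const, nsmul_eq_mul, Finset.card_univ, Fintype.card_fin]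
        _ ≤ ∑ j : Fin d, ∑ v, (x (v,j))^2 := Finset.sum_le_sum (fun j _ => hj j)
    rw [hL1, hquad]
    have h1 : A^2 * (f ⬝ᵥ (G.lapMatrix ℝ *ᵥ f)) ≤ A^2 * (algConn G * (f ⬝ᵥ f)) :=
      mul_le_mul_of_nonneg_left hfMa (sq_nonneg A)
    have h2 : (algConn G / d) * ((d:ℝ) * (A^2 * (f ⬝ᵥ f))) ≤ (algConn G / d) * (x ⬝ᵥ x) :=
      mul_le_mul_of_nonneg_left hxx hbound
    have h3 : A^2 * (algConn G * (f ⬝ᵥ f)) = (algConn G / d) * ((d:ℝ) * (A^2 * (f ⬝ᵥ f))) := by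
      field_simp
    linarith
  have hherm : (fLap G p).IsHermitian := by
    rw [fLap]
    have h := Matrix.isHermitian_conjTranspose_mul_self (rigidity G p)
    rwa [Matrix.conjTranspose_eq_transpose_of_trivial] at h
  have hfin := AuxLinf.eigval_le hherm (k := d+1) (by omega) vv hli hray
  exact hfin
end

section
/- Let n ≥ 2 and d ≥ 1, and let M be a symmetric positive semidefinite real dn × dn matrix with rows and columns indexed by {1,…,d} × {1,…,n}. Suppose M z_i = 0 for each i ∈ {1,…,d}, where z_i ∈ ℝ^{dn} is the 0–1 vector whose entries equal 1 exactly on the indices {i} × {1,…,n}. Then λ_{d+1}(M) ≤ (n/(n−1)) · min over all diagonal entries of M. -/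
open Polynomial Matrix

lemma charpoly_conj_aux {m : Type*} [Fintype m] [DecidableEq m] (U V A : Matrix m m ℝ)
    (hUV : U * V = 1) : (U * A * V).charpoly = A.charpoly := by
  have hdiag : (Matrix.diagonal fun _ : m => (X : ℝ[X])) = (X : ℝ[X]) • (1 : Matrix m m ℝ[X]) := by
    rw [Matrix.smul_one_eq_diagonal]
  have hone : U.map C * V.map C = 1 := by
    rw [← Matrix.map_mul, hUV]; simp
  have key : charmatrix (U * A * V) = U.map C * charmatrix A * V.map C := by
    unfold charmatrix
    rw [mul_sub, sub_mul]
    congr 1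
    · rw [scalar_apply, hdiag, Matrix.mul_smul, Matrix.smul_mul, mul_one, hone]
    · have : (C : ℝ →+* ℝ[X]).mapMatrix (U * A * V)
          = (C : ℝ →+* ℝ[X]).mapMatrix U * (C : ℝ →+* ℝ[X]).mapMatrix A
            * (C : ℝ →+* ℝ[X]).mapMatrix V := by
        simp [_root_.map_mul]
      rw [this]; rfl
  have hdet : det (U.map C) * det (V.map C) = 1 := by rw [← det_mul, hone, det_one]
  calc (U * A * V).charpoly = det (U.map C) * det (charmatrix A) * det (V.map C) := by
        rw [Matrix.charpoly, key, det_mul, det_mul]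
    _ = det (charmatrix A) * (det (U.map C) * det (V.map C)) := by ring
    _ = A.charpoly := by rw [hdet, mul_one]; rfl

lemma charpoly_roots_diagonal {m : Type*} [Fintype m] [DecidableEq m] (v : m → ℝ) :
    (Matrix.diagonal v).charpoly.roots = Finset.univ.val.map v := by
  have hcm : charmatrix (Matrix.diagonal v) = Matrix.diagonal fun i => (X : ℝ[X]) - C (v i) := by
    ext i j
    by_cases h : i = j
    · subst h; simp [charmatrix_apply_eq]
    · simp [charmatrix_apply_ne _ _ _ h, Matrix.diagonal_apply_ne _ h]
  have hcp : (Matrix.diagonal v).charpoly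
      = ((Finset.univ.val.map v).map (fun a => X - C a)).prod := by
    rw [Matrix.charpoly, hcm, det_diagonal, Multiset.map_map, Finset.prod_eq_multiset_prod]
    rfl
  rw [hcp, roots_multiset_prod_X_sub_C]

lemma charpoly_roots_herm {m : Type*} [Fintype m] [DecidableEq m] {A : Matrix m m ℝ}
    (hA : A.IsHermitian)
    (hconj : ∀ U V B : Matrix m m ℝ, U * V = 1 → (U * B * V).charpoly = B.charpoly)
    (hdiagroots : ∀ v : m → ℝ, (Matrix.diagonal v).charpoly.roots = Finset.univ.val.map v) :
    A.charpoly.roots = Finset.univ.val.map hA.eigenvalues := by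
  have hsp := hA.spectral_theorem
  have hdiag : Matrix.diagonal ((RCLike.ofReal : ℝ → ℝ) ∘ hA.eigenvalues)
      = Matrix.diagonal hA.eigenvalues := by
    congr 1
  rw [hdiag] at hsp
  have hU : (hA.eigenvectorUnitary : Matrix m m ℝ) * star (hA.eigenvectorUnitary : Matrix m m ℝ)
      = 1 := Matrix.mem_unitaryGroup_iff.mp hA.eigenvectorUnitary.2
  conv_lhs => rw [hsp]
  rw [Unitary.conjStarAlgAut_apply, hconj _ _ _ hU, hdiagroots]

lemma sorted_getD_le (L : List ℝ) (hs : L.Pairwise (· ≤ ·)) (c : ℝ) (k : ℕ)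
    (hk : k < L.length) (hcount : k + 1 ≤ (L.filter (fun x => decide (x ≤ c))).length) :
    L.getD k 0 ≤ c := by
  by_contra hlt
  push_neg at hlt
  rw [List.getD_eq_getElem L 0 hk] at hlt
  have hdropnil : ∀ x ∈ L.drop k, ¬ (x ≤ c) := by
    have hsub : (L.drop k).Pairwise (· ≤ ·) := hs.sublist (List.drop_sublist k L)
    rw [List.drop_eq_getElem_cons hk] at hsub ⊢
    intro x hx
    rw [List.mem_cons] at hx
    rcases hx with hx | hx
    · subst hx; exact not_le.mpr hlt
    · exact not_le.mpr (lt_of_lt_of_le hlt ((List.pairwise_cons.mp hsub).1 x hx))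
  have hfil : L.filter (fun x => decide (x ≤ c))
      = (L.take k).filter (fun x => decide (x ≤ c)) := by
    conv_lhs => rw [← List.take_append_drop k L]
    rw [List.filter_append]
    have : (L.drop k).filter (fun x => decide (x ≤ c)) = [] := by
      rw [List.filter_eq_nil_iff]
      intro x hx
      simpa using hdropnil x hx
    rw [this, List.append_nil]
  rw [hfil] at hcount
  have := (List.length_filter_le (fun x => decide (x ≤ c)) (L.take k)).trans
    (List.length_take_le k L)
  omega

lemma sum_dotProduct' {m ι : Type*} [Fintype m] (s : Finset ι) (f : ι → m → ℝ) (w : m → ℝ) :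
    (∑ i ∈ s, f i) ⬝ᵥ w = ∑ i ∈ s, f i ⬝ᵥ w := by
  simp only [dotProduct, Finset.sum_apply, Finset.sum_mul]
  rw [Finset.sum_comm]

lemma dotProduct_sum' {m ι : Type*} [Fintype m] (s : Finset ι) (w : m → ℝ) (f : ι → m → ℝ) :
    w ⬝ᵥ (∑ i ∈ s, f i) = ∑ i ∈ s, w ⬝ᵥ f i := by
  simp only [dotProduct, Finset.sum_apply, Finset.mul_sum]
  rw [Finset.sum_comm]

noncomputable section

set_option maxHeartbeats 1000000

/-- Let `n ≥ 2`, `d ≥ 1` and let `M` be a symmetric positive semidefinite real `dn × dn`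
matrix indexed by `{1,…,d} × {1,…,n}` with `M zᵢ = 0` for each `i`, where `zᵢ` is the 0–1
vector supported exactly on `{i} × {1,…,n}`. Then
`λ_{d+1}(M) ≤ (n/(n−1)) · min over all diagonal entries of M`. -/
theorem lambda_succ_le_min_diag (n d : ℕ) (hn : 2 ≤ n) (hd : 1 ≤ d)
    (M : Matrix (Fin d × Fin n) (Fin d × Fin n) ℝ)
    (hM : M.PosSemidef)
    (hz : ∀ i : Fin d,
      M.mulVec (fun q : Fin d × Fin n => if q.1 = i then (1 : ℝ) else 0) = 0) :
    eigval M (d + 1) ≤ (n / (n - 1) : ℝ) * ⨅ q : Fin d × Fin n, M q q := by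
  classical
  have hn' : (2:ℝ) ≤ (n:ℝ) := by exact_mod_cast hn
  have hnpos : (0:ℝ) < n := by linarith
  have hn1 : (0:ℝ) < (n:ℝ) - 1 := by linarith
  -- minimal diagonal entry
  have hne : Nonempty (Fin d × Fin n) := ⟨(⟨0, hd⟩, ⟨0, by omega⟩)⟩
  obtain ⟨q0, hq0⟩ := Finite.exists_min (fun q : Fin d × Fin n => M q q)
  have hinf : (⨅ q : Fin d × Fin n, M q q) = M q0 q0 :=
    le_antisymm (ciInf_le (Finite.bddBelow_range _) q0) (le_ciInf hq0)
  set c : ℝ := (n / (n-1) : ℝ) * M q0 q0 with hc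
  have hQ : ∀ x : Fin d × Fin n → ℝ, 0 ≤ x ⬝ᵥ (M *ᵥ x) := fun x => by
    simpa using hM.dotProduct_mulVec_nonneg x
  have hM0 : 0 ≤ M q0 q0 := by
    have := hQ (Pi.single q0 1)
    simpa [single_dotProduct, Matrix.mulVec_single] using this
  have hc0 : 0 ≤ c := mul_nonneg (by positivity) hM0
  have hMT : Mᵀ = M := by
    ext i j
    have := congrFun (congrFun hM.1 i) j
    simpa [Matrix.conjTranspose_apply] using this
  set z : Fin d → (Fin d × Fin n → ℝ) :=
      fun i q => if q.1 = i then (1:ℝ) else 0 with hzdef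
  have hzker : ∀ i, M *ᵥ z i = 0 := hz
  have hvM : ∀ (i) (x : Fin d × Fin n → ℝ), z i ⬝ᵥ (M *ᵥ x) = 0 := by
    intro i x
    rw [Matrix.dotProduct_mulVec, ← Matrix.mulVec_transpose, hMT, hzker, zero_dotProduct]
  set e : Fin d × Fin n → ℝ := Pi.single q0 1 with hedef
  set v : Fin d × Fin n → ℝ := e - (n:ℝ)⁻¹ • z q0.1 with hvdef
  -- basic dot products
  have hzz : ∀ i j, z i ⬝ᵥ z j = if i = j then (n:ℝ) else 0 := by
    intro i j
    simp only [dotProduct, hzdef, Fintype.sum_prod_type]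
    by_cases h : i = j
    · subst h
      simp [Finset.sum_ite_eq]
    · rw [if_neg h]
      apply Finset.sum_eq_zero
      intro a _
      apply Finset.sum_eq_zero
      intro b _
      by_cases ha : a = i
      · simp [ha, Ne.symm, h]
      · simp [ha]
  have hze : ∀ i, z i ⬝ᵥ e = if q0.1 = i then (1:ℝ) else 0 := by
    intro i
    rw [hedef, dotProduct_single, mul_one]
  have hez : ∀ i, e ⬝ᵥ z i = if q0.1 = i then (1:ℝ) else 0 := by
    intro i
    rw [hedef, single_dotProduct, one_mul]
  have hee : e ⬝ᵥ e = 1 := by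
    rw [hedef, single_dotProduct, one_mul, Pi.single_eq_same]
  have hzv : ∀ i, z i ⬝ᵥ v = 0 := by
    intro i
    rw [hvdef, dotProduct_sub, dotProduct_smul, hze, hzz]
    by_cases h : i = q0.1
    · subst h
      simp only [if_pos rfl, if_true, smul_eq_mul]
      field_simp
      ring
    · simp [h, Ne.symm h]
  have hvv : v ⬝ᵥ v = 1 - (n:ℝ)⁻¹ := by
    rw [hvdef, sub_dotProduct, smul_dotProduct]
    rw [dotProduct_sub, dotProduct_smul, dotProduct_sub,
      dotProduct_smul, hee, hez, hze, hzz]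
    simp only [if_pos rfl, if_true, smul_eq_mul]
    field_simp
    ring
  -- quadratic form values
  have heMe : e ⬝ᵥ (M *ᵥ e) = M q0 q0 := by
    rw [hedef, Matrix.mulVec_single, single_dotProduct]
    simp
  have hvMe : v ⬝ᵥ (M *ᵥ e) = M q0 q0 := by
    rw [hvdef, sub_dotProduct, smul_dotProduct, heMe, hvM, smul_zero, sub_zero]
  have hMvMe : M *ᵥ v = M *ᵥ e := by
    rw [hvdef, Matrix.mulVec_sub, Matrix.mulVec_smul, hzker, smul_zero, sub_zero]
  -- eigenvalue machinery
  set eig : Fin d × Fin n → ℝ := hM.1.eigenvalues with heig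
  set U : Matrix (Fin d × Fin n) (Fin d × Fin n) ℝ :=
    (hM.1.eigenvectorUnitary : Matrix (Fin d × Fin n) (Fin d × Fin n) ℝ) with hUdef
  have hU2 : star U * U = 1 := (Unitary.mem_iff.mp hM.1.eigenvectorUnitary.2).1
  have hU1 : U * star U = 1 := (Unitary.mem_iff.mp hM.1.eigenvectorUnitary.2).2
  have hUT : (star U)ᵀ = U := by
    ext i j
    simp [Matrix.transpose_apply, Matrix.star_apply]
  have hUT' : Uᵀ = star U := by
    ext i j
    simp [Matrix.transpose_apply, Matrix.star_apply]
  have hdot : ∀ (A : Matrix (Fin d × Fin n) (Fin d × Fin n) ℝ) (x y : Fin d × Fin n → ℝ),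
      (A *ᵥ x) ⬝ᵥ y = x ⬝ᵥ (Aᵀ *ᵥ y) := by
    intro A x y
    rw [dotProduct_comm, Matrix.dotProduct_mulVec, dotProduct_comm,
      Matrix.mulVec_transpose]
  have hspectral : M = U * Matrix.diagonal eig * star U := by
    have hsp := hM.1.spectral_theorem
    have hdiagid : Matrix.diagonal ((RCLike.ofReal : ℝ → ℝ) ∘ hM.1.eigenvalues)
        = Matrix.diagonal eig := by congr 1
    rw [hdiagid] at hsp
    rw [Unitary.conjStarAlgAut_apply] at hsp
    exact hsp
  set K : Finset (Fin d × Fin n) := Finset.univ.filter (fun k => eig k ≤ c) with hKdef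
  have hKcard : d + 1 ≤ K.card := by
    by_contra hKd
    push_neg at hKd
    have hKd' : K.card ≤ d := by omega
    -- the matrix of the d+1 test vectors
    set B : Matrix (Fin d × Fin n) (Fin (d+1)) ℝ :=
      Matrix.of (fun q j => if h : (j:ℕ) < d then z ⟨j, h⟩ q else v q) with hBdef
    set φ : (Fin (d+1) → ℝ) →ₗ[ℝ] (↥K → ℝ) :=
      (LinearMap.funLeft ℝ ℝ (fun k : ↥K => (k : Fin d × Fin n))).comp
        (Matrix.mulVecLin (star U * B)) with hphidef
    have hni : ¬ Function.Injective φ := by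
      intro hinj
      have h1 := LinearMap.finrank_le_finrank_of_injective hinj
      rw [Module.finrank_pi, Module.finrank_pi] at h1
      simp only [Fintype.card_fin, Fintype.card_coe] at h1
      omega
    rw [Function.not_injective_iff] at hni
    obtain ⟨p1, p2, hpeq, hpne⟩ := hni
    set p : Fin (d+1) → ℝ := p1 - p2 with hpdef
    have hp0 : p ≠ 0 := sub_ne_zero.mpr hpne
    have hphip : φ p = 0 := by
      rw [hpdef, map_sub, hpeq, sub_self]
    set a : Fin d → ℝ := fun i => p i.castSucc with hadef
    set t : ℝ := p (Fin.last d) with htdef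
    set wv : Fin d × Fin n → ℝ := B *ᵥ p with hwvdef
    have hwv : wv = (∑ i, a i • z i) + t • v := by
      funext q
      show (fun j => B q j) ⬝ᵥ p = _
      rw [dotProduct]
      rw [Fin.sum_univ_castSucc]
      simp only [Finset.sum_apply, Pi.add_apply, Pi.smul_apply, smul_eq_mul]
      congr 1
      · apply Finset.sum_congr rfl
        intro i _
        have hlt : ((i.castSucc : Fin (d+1)) : ℕ) < d := by simp [i.2]
        have hfin : (⟨((i.castSucc : Fin (d+1)) : ℕ), hlt⟩ : Fin d) = i := by
          ext; simp
        rw [hBdef]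
        simp only [Matrix.of_apply, dif_pos hlt]
        rw [hfin, mul_comm]
      · have hnlt : ¬ (((Fin.last d) : Fin (d+1)) : ℕ) < d := by simp
        rw [hBdef]
        simp only [Matrix.of_apply, dif_neg hnlt]
        rw [mul_comm]
    set y : Fin d × Fin n → ℝ := star U *ᵥ wv with hydef
    have hyK : ∀ k, eig k ≤ c → y k = 0 := by
      intro k hk
      have hkK : k ∈ K := by rw [hKdef]; simp [hk]
      have := congrFun hphip ⟨k, hkK⟩
      simpa [hphidef, hydef, hwvdef, LinearMap.funLeft, Matrix.mulVecLin_apply,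
        ← Matrix.mulVec_mulVec] using this
    have hyy : y ⬝ᵥ y = wv ⬝ᵥ wv := by
      calc y ⬝ᵥ y = wv ⬝ᵥ ((star U)ᵀ *ᵥ y) := by rw [hydef, hdot]
        _ = wv ⬝ᵥ ((U * star U) *ᵥ wv) := by rw [hUT, hydef, Matrix.mulVec_mulVec]
        _ = wv ⬝ᵥ wv := by rw [hU1, Matrix.one_mulVec]
    have hspec : wv ⬝ᵥ (M *ᵥ wv) = y ⬝ᵥ (Matrix.diagonal eig *ᵥ y) := by
      conv_lhs => rw [hspectral]
      rw [← Matrix.mulVec_mulVec, ← Matrix.mulVec_mulVec]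
      rw [show wv ⬝ᵥ (U *ᵥ (Matrix.diagonal eig *ᵥ (star U *ᵥ wv)))
          = (Uᵀ *ᵥ wv) ⬝ᵥ (Matrix.diagonal eig *ᵥ (star U *ᵥ wv)) by
        rw [hdot, Matrix.transpose_transpose]]
      rw [hUT', hydef]
    -- quadratic form of wv
    have hMwv : M *ᵥ wv = t • (M *ᵥ e) := by
      rw [hwv, Matrix.mulVec_add, Matrix.mulVec_smul, hMvMe]
      have hsum0 : M *ᵥ (∑ i, a i • z i) = 0 := by
        have : M *ᵥ (∑ i, a i • z i) = M.mulVecLin (∑ i, a i • z i) := rfl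
        rw [this, map_sum]
        apply Finset.sum_eq_zero
        intro i _
        rw [_root_.map_smul, Matrix.mulVecLin_apply, hzker, smul_zero]
      rw [hsum0, zero_add]
    have hq1 : wv ⬝ᵥ (M *ᵥ wv) = t^2 * M q0 q0 := by
      rw [hMwv, dotProduct_smul, hwv, add_dotProduct, sum_dotProduct' Finset.univ _ _]
      have hz0 : ∀ i ∈ Finset.univ, (a i • z i) ⬝ᵥ (M *ᵥ e) = 0 := by
        intro i _
        rw [smul_dotProduct, hvM, smul_zero]
      rw [Finset.sum_eq_zero hz0, smul_dotProduct, hvMe]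
      simp only [smul_eq_mul, zero_add]
      ring
    have hq2 : wv ⬝ᵥ wv = (∑ i, (a i)^2) * n + t^2 * (1 - (n:ℝ)⁻¹) := by
      have hcross1 : (∑ i, a i • z i) ⬝ᵥ (t • v) = 0 := by
        rw [dotProduct_smul, sum_dotProduct' Finset.univ _ _]
        rw [Finset.sum_eq_zero, smul_zero]
        intro i _
        rw [smul_dotProduct, hzv, smul_zero]
      have hcross2 : (t • v) ⬝ᵥ (∑ i, a i • z i) = 0 := by
        rw [dotProduct_comm]
        exact hcross1
      have hmain : (∑ i, a i • z i) ⬝ᵥ (∑ i, a i • z i) = (∑ i, (a i)^2) * n := by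
        rw [sum_dotProduct' Finset.univ _ _]
        rw [Finset.sum_mul]
        apply Finset.sum_congr rfl
        intro i _
        rw [smul_dotProduct, dotProduct_sum' Finset.univ _ _]
        have : ∀ j ∈ Finset.univ, z i ⬝ᵥ (a j • z j) = a j * (if i = j then (n:ℝ) else 0) := by
          intro j _
          rw [dotProduct_smul, hzz, smul_eq_mul]
        rw [Finset.sum_congr rfl this]
        simp only [mul_ite, mul_zero, Finset.sum_ite_eq, Finset.mem_univ, if_pos]
        simp only [smul_eq_mul]
        ring
      rw [hwv, add_dotProduct, dotProduct_add, dotProduct_add,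
        hmain, hcross1, hcross2]
      rw [smul_dotProduct, dotProduct_smul, hvv]
      simp only [smul_eq_mul]
      ring
    -- wv is nonzero
    have hwv0 : wv ≠ 0 := by
      intro h0
      apply hp0
      have ha0 : ∀ i, a i = 0 := by
        intro i
        have : z i ⬝ᵥ wv = a i * n := by
          rw [hwv, dotProduct_add, dotProduct_smul, hzv, smul_zero, add_zero]
          rw [dotProduct_sum' Finset.univ _ _]
          have : ∀ j ∈ Finset.univ, z i ⬝ᵥ (a j • z j) = a j * (if i = j then (n:ℝ) else 0) := by
            intro j _
            rw [dotProduct_smul, hzz, smul_eq_mul]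
          rw [Finset.sum_congr rfl this]
          simp [Finset.sum_ite_eq]
        rw [h0, dotProduct_zero] at this
        have hn0 : (n:ℝ) ≠ 0 := ne_of_gt hnpos
        rcases mul_eq_zero.mp this.symm with h | h
        · exact h
        · exact absurd h hn0
      have ht0 : t = 0 := by
        have : v ⬝ᵥ wv = t * (1 - (n:ℝ)⁻¹) := by
          rw [hwv, dotProduct_add, dotProduct_smul, hvv, dotProduct_sum' Finset.univ _ _]
          have : ∀ j ∈ Finset.univ, v ⬝ᵥ (a j • z j) = 0 := by
            intro j _
            rw [dotProduct_smul, dotProduct_comm, hzv, smul_zero]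
          rw [Finset.sum_eq_zero this, zero_add, smul_eq_mul]
        rw [h0, dotProduct_zero] at this
        have h1n : 1 - (n:ℝ)⁻¹ ≠ 0 := by
          have : (n:ℝ)⁻¹ < 1 := by
            rw [inv_lt_one_iff₀]; right; linarith
          linarith
        have := this.symm
        rcases mul_eq_zero.mp this with h | h
        · exact h
        · exact absurd h h1n
      funext j
      refine Fin.lastCases ?_ ?_ j
      · exact ht0
      · intro i; exact ha0 i
    have hy0 : y ≠ 0 := by
      intro h0
      apply hwv0
      have : wv = (U * star U) *ᵥ wv := by rw [hU1, Matrix.one_mulVec]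
      rw [this, ← Matrix.mulVec_mulVec, ← hydef, h0, Matrix.mulVec_zero]
    -- final contradiction
    obtain ⟨k1, hk1⟩ := Function.ne_iff.mp hy0
    have hk1c : c < eig k1 := by
      by_contra h
      push_neg at h
      exact hk1 (hyK k1 h)
    have hdiagdot : y ⬝ᵥ (Matrix.diagonal eig *ᵥ y) = ∑ k, eig k * (y k)^2 := by
      rw [dotProduct]
      apply Finset.sum_congr rfl
      intro k _
      rw [Matrix.mulVec_diagonal]
      ring
    have hyy2 : y ⬝ᵥ y = ∑ k, (y k)^2 := by
      rw [dotProduct]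
      apply Finset.sum_congr rfl
      intro k _
      ring
    have hkey : c * (y ⬝ᵥ y) < y ⬝ᵥ (Matrix.diagonal eig *ᵥ y) := by
      rw [hdiagdot, hyy2, Finset.mul_sum, ← sub_pos, ← Finset.sum_sub_distrib]
      apply Finset.sum_pos'
      · intro k _
        by_cases hk : eig k ≤ c
        · rw [hyK k hk]; ring_nf; simp
        · push_neg at hk
          nlinarith [sq_nonneg (y k)]
      · refine ⟨k1, Finset.mem_univ _, ?_⟩
        have hk1' : y k1 ≠ 0 := by simpa using hk1
        have : (0:ℝ) < (y k1)^2 := by positivity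
        nlinarith
    rw [← hspec, hyy, hq1, hq2] at hkey
    have hsum_nonneg : 0 ≤ (∑ i, (a i)^2) * n := by positivity
    have hceq : c * (1 - (n:ℝ)⁻¹) = M q0 q0 := by
      rw [hc]
      field_simp
    nlinarith [mul_nonneg hc0 hsum_nonneg]
  -- conclude via root counting
  have hroots : M.charpoly.roots = Finset.univ.val.map eig :=
    charpoly_roots_herm hM.1 (fun U V B h => charpoly_conj_aux U V B h) charpoly_roots_diagonal
  set L : List ℝ := sortedEigs M with hL
  have hLsort : L.Pairwise (· ≤ ·) := Multiset.pairwise_sort _ _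
  have hLcoe : (L : Multiset ℝ) = M.charpoly.roots := Multiset.sort_eq _ _
  have hLlen : L.length = d * n := by
    have h0 : L.length = Multiset.card M.charpoly.roots := by
      rw [hL]; unfold sortedEigs; rw [Multiset.length_sort]
    rw [h0, hroots, Multiset.card_map]
    simp [Finset.card_univ]
  have hdlt : d < L.length := by
    rw [hLlen]; nlinarith
  have hcnt : d + 1 ≤ (L.filter (fun x => decide (x ≤ c))).length := by
    have h1 : ((L.filter (fun x => decide (x ≤ c)) : List ℝ) : Multiset ℝ)
        = Multiset.filter (fun x => x ≤ c) (L : Multiset ℝ) := by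
      rw [Multiset.filter_coe]
    have h2 : (L.filter (fun x => decide (x ≤ c))).length
        = Multiset.card (Multiset.filter (fun x => x ≤ c) M.charpoly.roots) := by
      rw [← hLcoe, ← h1, Multiset.coe_card]
    rw [h2, hroots, Multiset.filter_map, Multiset.card_map]
    have h3 : Multiset.filter ((fun x => x ≤ c) ∘ eig) Finset.univ.val = K.val := by
      rw [hKdef, Finset.filter_val]
      apply Multiset.filter_congr
      intro k _
      exact Iff.rfl
    rw [h3]
    exact hKcard
  have hfin := sorted_getD_le L hLsort c d hdlt hcnt
  have hev : eigval M (d+1) = L.getD d 0 := by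
    unfold eigval
    rw [← hL]
    norm_num
  rw [hev, hinf]
  exact hfin

end
end
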